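/- arXiv:1405.7671 — 3 statements merged into one kernel-verified Lean document; each statement's English description precedes it below -/
import Mathlib

section
/- Let y > 0 and let y_m (m ≥ 1) be a decreasing sequence of reals with y_m ≤ y. Define D⁺ as the set of squarefree integers d = p₁⋯p_r with p_r < ⋯ < p₁ and p_m ≤ y_m for all odd m, and ρ⁺(n) = ∑_{d | n, d ∈ D⁺} μ(d). Then for every positive integer n: if all prime factors of n exceed y then ρ⁺(n) = 1, and in general ρ⁺(n) ≥ 1_{P⁻(n) > y}, where P⁻(n) is the least prime factor of n (with P⁻(1) = ∞). -/
open scoped Classical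

/-- `d ∈ D⁺`: `d` is squarefree and, writing `d = p₁ ⋯ p_r` with
`p_r < ⋯ < p₁`, we have `p_m ≤ ys m` for all odd `m`. -/
def DPlus (ys : ℕ → ℝ) (d : ℕ) : Prop :=
  Squarefree d ∧ ∀ m : ℕ, Odd m →
    ∀ hm : m - 1 < d.primeFactorsList.reverse.length,
      ((d.primeFactorsList.reverse.get ⟨m - 1, hm⟩ : ℕ) : ℝ) ≤ ys m

/-- Brun's sieve weight `ρ⁺(n) = ∑_{d ∣ n, d ∈ D⁺} μ(d)`. -/
noncomputable def rhoPlus (ys : ℕ → ℝ) (n : ℕ) : ℤ :=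
  ∑ d ∈ n.divisors, if DPlus ys d then ArithmeticFunction.moebius d else 0

/-- Admissibility of a (descending) list wrt constraints at positions of parity `c`
(`c = true`: 1-based odd positions, i.e. 0-based even indices). -/
def Adm (c : Bool) (ys : ℕ → ℝ) (S : List ℕ) : Prop :=
  ∀ i (h : i < S.length), i % 2 = (if c then 0 else 1) →
    ((S.get ⟨i, h⟩ : ℕ) : ℝ) ≤ ys (i + 1)

lemma adm_nil (c : Bool) (ys : ℕ → ℝ) : Adm c ys [] := by
  intro i h
  simp at h

lemma adm_cons {c : Bool} {ys : ℕ → ℝ} {a : ℕ} {S : List ℕ} :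
    Adm c ys (a :: S) ↔ ((c = true → (a : ℝ) ≤ ys 1) ∧ Adm (!c) (fun m => ys (m + 1)) S) := by
  constructor
  · intro h
    refine ⟨fun hc => ?_, fun i hi hpar => ?_⟩
    · have := h 0 (by simp) (by subst hc; simp)
      simpa using this
    · have hi' : i + 1 < (a :: S).length := by simpa using Nat.succ_lt_succ hi
      have := h (i + 1) hi' (by cases c <;> simp at hpar ⊢ <;> omega)
      simpa using this
  · rintro ⟨h0, h1⟩ i hi hpar
    match i with
    | 0 =>
      have hc : c = true := by cases c <;> simp at hpar ⊢
      simpa using h0 hc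
    | (j + 1) =>
      have hj : j < S.length := by simpa using hi
      have := h1 j hj (by cases c <;> simp at hpar ⊢ <;> omega)
      simpa using this

/-- Generalized Brun weight over subsets of a finite set of naturals. -/
noncomputable def gF (c : Bool) (ys : ℕ → ℝ) (P : Finset ℕ) : ℤ :=
  ∑ T ∈ P.powerset,
    if Adm c ys ((T.sort (· ≤ ·)).reverse) then (-1 : ℤ) ^ T.card else 0

lemma sort_insert_max {a : ℕ} {S : Finset ℕ} (ha : a ∉ S) (hlt : ∀ b ∈ S, b < a) :
    (insert a S).sort (· ≤ ·) = S.sort (· ≤ ·) ++ [a] := by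
  apply (fun h1 h2 h3 => List.Perm.eq_of_pairwise' (r := (· ≤ · : ℕ → ℕ → Prop)) h2 h3 h1)
  · exact ((Finset.sort_perm_toList _ _).trans ((Finset.toList_insert ha).trans
      (((Finset.sort_perm_toList _ _).symm.cons a).trans
        (List.perm_append_singleton _ _).symm)))
  · exact Finset.pairwise_sort _ _
  · rw [List.pairwise_append]
    refine ⟨Finset.pairwise_sort _ _, List.pairwise_singleton _ _, fun x hx b hb => ?_⟩
    have : x ∈ S := (Finset.mem_sort _).1 hx
    have hb' : b = a := by simpa using hb
    subst hb'
    exact (hlt x this).le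

lemma gF_insert (c : Bool) (ys : ℕ → ℝ) {a : ℕ} {S : Finset ℕ} (ha : a ∉ S)
    (hlt : ∀ b ∈ S, b < a) :
    gF c ys (insert a S) = gF c ys S +
      (if (c = true → (a : ℝ) ≤ ys 1) then -gF (!c) (fun m => ys (m + 1)) S else 0) := by
  unfold gF
  rw [Finset.sum_powerset_insert ha]
  congr 1
  have key : ∀ T ∈ S.powerset,
      (if Adm c ys (((insert a T).sort (· ≤ ·)).reverse) then (-1 : ℤ) ^ (insert a T).card else 0)
      = (if (c = true → (a : ℝ) ≤ ys 1) then
          -(if Adm (!c) (fun m => ys (m + 1)) ((T.sort (· ≤ ·)).reverse) then (-1 : ℤ) ^ T.card else 0)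
         else 0) := by
    intro T hT
    have hTS : T ⊆ S := Finset.mem_powerset.1 hT
    have haT : a ∉ T := fun h => ha (hTS h)
    have hltT : ∀ b ∈ T, b < a := fun b hb => hlt b (hTS hb)
    rw [sort_insert_max haT hltT]
    rw [List.reverse_append]
    simp only [List.reverse_singleton, List.singleton_append]
    rw [Finset.card_insert_of_notMem haT]
    by_cases h0 : (c = true → (a : ℝ) ≤ ys 1)
    · rw [if_pos h0]
      by_cases h1 : Adm (!c) (fun m => ys (m + 1)) ((T.sort (· ≤ ·)).reverse)
      · rw [if_pos (adm_cons.2 ⟨h0, h1⟩), if_pos h1]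
        ring
      · rw [if_neg (fun hh => h1 (adm_cons.1 hh).2), if_neg h1]
        ring
    · rw [if_neg h0, if_neg (fun hh => h0 (adm_cons.1 hh).1)]
  rw [Finset.sum_congr rfl key]
  by_cases h0 : (c = true → (a : ℝ) ≤ ys 1)
  · simp only [if_pos h0, ← Finset.sum_neg_distrib]
  · simp only [if_neg h0, Finset.sum_const_zero]

lemma gF_empty (c : Bool) (ys : ℕ → ℝ) : gF c ys ∅ = 1 := by
  unfold gF
  rw [Finset.powerset_empty, Finset.sum_singleton]
  rw [if_pos]
  · simp
  · simpa using adm_nil c ys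

lemma gF_main (y : ℝ) :
    ∀ P : Finset ℕ, ∀ ys : ℕ → ℝ, (∀ m : ℕ, 1 ≤ m → ys m ≤ y) →
      ((if ∀ q ∈ P, y < (q : ℝ) then (1 : ℤ) else 0) ≤ gF true ys P) ∧
      (gF false ys P ≤ (if ∀ q ∈ P, y < (q : ℝ) then (1 : ℤ) else 0)) := by
  intro P
  induction P using Finset.strongInductionOn with
  | _ P IH =>
    intro ys hbd
    rcases P.eq_empty_or_nonempty with rfl | hne
    · simp [gF_empty]
    · set a := P.max' hne with ha_def
      set S := P.erase a with hS_def
      have haP : a ∈ P := P.max'_mem hne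
      have haS : a ∉ S := Finset.notMem_erase _ _
      have hins : insert a S = P := Finset.insert_erase haP
      have hlt : ∀ b ∈ S, b < a := by
        intro b hb
        rcases Finset.mem_erase.1 hb with ⟨hne', hbP⟩
        exact lt_of_le_of_ne (P.le_max' b hbP) hne'
      have hSsub : S ⊂ P := Finset.erase_ssubset haP
      have hbd' : ∀ m : ℕ, 1 ≤ m → (fun m => ys (m + 1)) m ≤ y := by
        intro m hm; exact hbd (m + 1) (by omega)
      have IH1 := IH S hSsub ys hbd
      have IH2 := IH S hSsub (fun m => ys (m + 1)) hbd'
      have hrecT := gF_insert true ys haS hlt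
      have hrecF := gF_insert false ys haS hlt
      rw [hins] at hrecT hrecF
      simp only [Bool.not_true, Bool.not_false, Bool.false_eq_true, false_implies,
        true_implies, if_true] at hrecT hrecF
      have hindS : (0 : ℤ) ≤ (if ∀ q ∈ S, y < (q : ℝ) then (1 : ℤ) else 0) := by
        split <;> norm_num
      have hindP : (if ∀ q ∈ P, y < (q : ℝ) then (1 : ℤ) else 0) ≤
          (if ∀ q ∈ S, y < (q : ℝ) then (1 : ℤ) else 0) := by
        by_cases hP : ∀ q ∈ P, y < (q : ℝ)
        · have hS : ∀ q ∈ S, y < (q : ℝ) := fun q hq => hP q (Finset.mem_erase.1 hq).2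
          rw [if_pos hP, if_pos hS]
        · rw [if_neg hP]; exact hindS
      constructor
      · -- upper bound side
        rw [hrecT]
        by_cases h1 : (a : ℝ) ≤ ys 1
        · rw [if_pos h1]
          have hP : ¬ ∀ q ∈ P, y < (q : ℝ) := by
            intro hP
            exact absurd (hP a haP) (not_lt.2 (h1.trans (hbd 1 le_rfl)))
          rw [if_neg hP]
          have := IH1.1
          have := IH2.2
          linarith
        · rw [if_neg h1]
          have := IH1.1
          linarith [hindP]
      · -- lower bound side
        rw [hrecF]
        have h1 := IH1.2
        have h2 := IH2.1
        have : gF false ys S + -gF true (fun m => ys (m + 1)) S ≤ 0 := by linarith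
        calc gF false ys S + -gF true (fun m => ys (m + 1)) S ≤ 0 := this
          _ ≤ _ := by split <;> norm_num

lemma gF_eq_one (y : ℝ) {P : Finset ℕ} {ys : ℕ → ℝ} (hbd : ys 1 ≤ y)
    (hP : ∀ q ∈ P, y < (q : ℝ)) : gF true ys P = 1 := by
  unfold gF
  rw [Finset.sum_eq_single_of_mem ∅ (Finset.mem_powerset.2 (Finset.empty_subset _))]
  · rw [if_pos (by simpa using adm_nil true ys)]; simp
  · intro T hT hTne
    rw [if_neg]
    intro hadm
    have hT' : T ⊆ P := Finset.mem_powerset.1 hT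
    have hne : T.Nonempty := Finset.nonempty_iff_ne_empty.2 hTne
    have hlen : 0 < ((T.sort (· ≤ ·)).reverse).length := by
      rw [List.length_reverse, Finset.length_sort]
      exact Finset.card_pos.2 hne
    have hle := hadm 0 hlen (by simp)
    have hmem : ((T.sort (· ≤ ·)).reverse).get ⟨0, hlen⟩ ∈ T := by
      have h1 : ((T.sort (· ≤ ·)).reverse).get ⟨0, hlen⟩ ∈ (T.sort (· ≤ ·)).reverse :=
        List.get_mem _ _
      rw [List.mem_reverse] at h1
      exact (Finset.mem_sort _).1 h1
    have hgt := hP _ (hT' hmem)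
    simp only [zero_add] at hle
    linarith

lemma dplus_iff {ys : ℕ → ℝ} {d : ℕ} (hd : Squarefree d) :
    DPlus ys d ↔ Adm true ys (d.primeFactorsList.reverse) := by
  constructor
  · rintro ⟨-, h⟩ i hi hpar
    have hodd : Odd (i + 1) := by
      rcases Nat.even_or_odd i with he | ho
      · exact he.add_one
      · exfalso; rw [Nat.odd_iff] at ho; simp at hpar; omega
    have hm : (i + 1) - 1 < d.primeFactorsList.reverse.length := by simpa using hi
    have := h (i + 1) hodd hm
    simpa using this
  · intro h
    refine ⟨hd, fun m hm hmlt => ?_⟩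
    have hm1 : 1 ≤ m := hm.pos
    have hpar : (m - 1) % 2 = 0 := by
      rcases hm with ⟨k, hk⟩
      subst hk; omega
    have := h (m - 1) hmlt (by simpa using hpar)
    have hmm : m - 1 + 1 = m := Nat.sub_add_cancel hm1
    rwa [hmm] at this

lemma squarefree_prod_primes {T : Finset ℕ} (h : ∀ p ∈ T, p.Prime) :
    Squarefree (∏ p ∈ T, p) := by
  induction T using Finset.induction with
  | empty => simpa using squarefree_one
  | @insert a T ha IH =>
    rw [Finset.prod_insert ha]
    have hap : a.Prime := h a (Finset.mem_insert_self _ _)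
    have hT : ∀ p ∈ T, p.Prime := fun p hp => h p (Finset.mem_insert_of_mem hp)
    have hcop : a.Coprime (∏ p ∈ T, p) := by
      rw [hap.coprime_iff_not_dvd]
      intro hdvd
      rcases (Nat.Prime.prime hap).dvd_finset_prod_iff id |>.1 hdvd with ⟨q, hq, haq⟩
      have := ((hT q hq).dvd_iff_eq hap.ne_one).1 haq
      exact ha (this ▸ hq)
    exact (Nat.squarefree_mul hcop).2 ⟨hap.squarefree, IH hT⟩

lemma sort_primeFactors {d : ℕ} (hd : Squarefree d) :
    d.primeFactors.sort (· ≤ ·) = d.primeFactorsList := by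
  apply (fun h1 h2 h3 => List.Perm.eq_of_pairwise' (r := (· ≤ · : ℕ → ℕ → Prop)) h2 h3 h1)
  · refine (Finset.sort_perm_toList _ _).trans ?_
    rw [Nat.primeFactors]
    exact List.toFinset_toList hd.nodup_primeFactorsList
  · exact Finset.pairwise_sort _ _
  · exact (Nat.primeFactorsList_sorted d).pairwise

lemma rhoPlus_eq_gF (ys : ℕ → ℝ) {n : ℕ} (hn : n ≠ 0) :
    rhoPlus ys n = gF true ys n.primeFactors := by
  unfold rhoPlus gF
  rw [← Finset.sum_filter_of_ne (p := fun d => Squarefree d)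
    (fun d _ h => by by_contra hsq; rw [if_neg (fun hD => hsq hD.1)] at h; exact h rfl)]
  apply Finset.sum_nbij' (i := fun d => d.primeFactors) (j := fun T => ∏ p ∈ T, p)
  · intro d hd
    rcases Finset.mem_filter.1 hd with ⟨hdvd, hsq⟩
    exact Finset.mem_powerset.2
      (Nat.primeFactors_mono (Nat.mem_divisors.1 hdvd).1 hn)
  · intro T hT
    have hT' : T ⊆ n.primeFactors := Finset.mem_powerset.1 hT
    have hprimes : ∀ p ∈ T, p.Prime := fun p hp => Nat.prime_of_mem_primeFactors (hT' hp)
    refine Finset.mem_filter.2 ⟨Nat.mem_divisors.2 ⟨?_, hn⟩, squarefree_prod_primes hprimes⟩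
    exact dvd_trans (Finset.prod_dvd_prod_of_subset _ _ _ hT') (Nat.prod_primeFactors_dvd n)
  · intro d hd
    exact Nat.prod_primeFactors_of_squarefree (Finset.mem_filter.1 hd).2
  · intro T hT
    exact Nat.primeFactors_prod
      (fun p hp => Nat.prime_of_mem_primeFactors (Finset.mem_powerset.1 hT hp))
  · intro d hd
    have hsq : Squarefree d := (Finset.mem_filter.1 hd).2
    have hsort : (d.primeFactors.sort (· ≤ ·)).reverse = d.primeFactorsList.reverse := by
      rw [sort_primeFactors hsq]
    rw [hsort]
    by_cases hD : DPlus ys d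
    · rw [if_pos hD, if_pos ((dplus_iff hsq).1 hD)]
      rw [ArithmeticFunction.moebius_apply_of_squarefree hsq]
      congr 1
      rw [ArithmeticFunction.cardFactors_apply, Nat.primeFactors,
        List.toFinset_card_of_nodup hsq.nodup_primeFactorsList]
    · rw [if_neg hD, if_neg (fun h => hD ((dplus_iff hsq).2 h))]

theorem brun_sieve_upper_bound_property (y : ℝ) (hy : 0 < y)
    (ys : ℕ → ℝ) (hdec : ∀ m, ys (m+1) ≤ ys m) (hbd : ∀ m : ℕ, 1 ≤ m → ys m ≤ y) :
    ∀ n : ℕ, 1 ≤ n →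
      ((∀ p : ℕ, p.Prime → p ∣ n → y < (p : ℝ)) → rhoPlus ys n = 1) ∧
      ((if ∀ p : ℕ, p.Prime → p ∣ n → y < (p : ℝ) then (1:ℤ) else 0) ≤ rhoPlus ys n) := by
  intro n hn
  have hn0 : n ≠ 0 := by omega
  have hbridge := rhoPlus_eq_gF ys hn0
  have hiff : (∀ p : ℕ, p.Prime → p ∣ n → y < (p : ℝ)) ↔
      (∀ q ∈ n.primeFactors, y < (q : ℝ)) := by
    constructor
    · intro h q hq
      exact h q (Nat.prime_of_mem_primeFactors hq) (Nat.dvd_of_mem_primeFactors hq)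
    · intro h p hp hpd
      exact h p (Nat.mem_primeFactors.2 ⟨hp, hpd, hn0⟩)
  constructor
  · intro h
    rw [hbridge]
    exact gF_eq_one y (hbd 1 le_rfl) (hiff.1 h)
  · rw [hbridge]
    have := (gF_main y n.primeFactors ys hbd).1
    by_cases h : ∀ p : ℕ, p.Prime → p ∣ n → y < (p : ℝ)
    · rw [if_pos h]
      rwa [if_pos (hiff.1 h)] at this
    · rw [if_neg h]
      rw [if_neg (fun hh => h (hiff.2 hh))] at this
      have h0 : (0:ℤ) ≤ gF true ys n.primeFactors := this
      exact h0
end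

section
/- With D⁺ and ρ⁺ as in Brun's sieve (y_m = y^{(1−γ²)γ^{m−1}/2} with 0 < γ < 1), for every positive integer n one has ρ⁺(n) − 1_{P⁻(n)>y} ≤ ∑_{r ≥ 0} 1_{P⁻(n) > y_{2r+1}} · 2^{−(2r+1)} · 2^{2ω(n)}, where ω(n) is the number of distinct prime factors of n. -/
open scoped Classical

open ArithmeticFunction Finset

/-- number of prime factors of `d` exceeding `t` -/
noncomputable def Npred (d : ℕ) (t : ℝ) : ℕ :=
  (d.primeFactors.filter (fun p : ℕ => t < (p : ℝ))).card

/-- first (odd-index) failure of the Brun truncation condition at index `2r+1` -/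
def FailAt (ys : ℕ → ℝ) (r d : ℕ) : Prop :=
  (∀ m : ℕ, Odd m → m < 2 * r + 1 → Npred d (ys m) < m) ∧
    2 * r + 1 ≤ Npred d (ys (2 * r + 1))

/-- toggle the prime `p` in `d` -/
def toggle (p d : ℕ) : ℕ := if p ∣ d then d / p else d * p

lemma sorted_get_lt_iff (t : ℝ) :
    ∀ (L : List ℕ), L.Pairwise (fun a b => b < a) →
      ∀ (k : ℕ) (hk : k < L.length),
        (t < ((L.get ⟨k, hk⟩ : ℕ) : ℝ) ↔ k < L.countP (fun p : ℕ => decide (t < (p : ℝ)))) := by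
  intro L
  induction L with
  | nil => intro _ k hk; simp at hk
  | cons a L ih =>
    intro hL k hk
    obtain ⟨ha, hL'⟩ := List.pairwise_cons.mp hL
    rw [List.countP_cons]
    by_cases hta : t < (a : ℝ)
    · match k with
      | 0 => simp [hta]
      | k + 1 =>
        have hk' : k < L.length := by simpa using hk
        have := ih hL' k hk'
        simp only [List.get_cons_succ]
        rw [this]
        simp [hta]
    · have h0 : L.countP (fun p : ℕ => decide (t < (p : ℝ))) = 0 := by
        rw [List.countP_eq_zero]
        intro b hb
        simp only [decide_eq_true_eq, not_lt]
        have : (b : ℝ) ≤ (a : ℝ) := by exact_mod_cast (ha b hb).le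
        exact this.trans (not_lt.mp hta)
      match k with
      | 0 => simp [h0, hta, not_lt.mp hta]
      | k + 1 =>
        have hk' : k < L.length := by simpa using hk
        have hmem : L.get ⟨k, hk'⟩ ∈ L := List.get_mem _ _
        have : ((L.get ⟨k, hk'⟩ : ℕ) : ℝ) < (a : ℝ) := by exact_mod_cast ha _ hmem
        simp only [List.get_cons_succ, h0]
        constructor
        · intro h; exact absurd (h.trans this) hta
        · intro h
          simp [hta] at h

lemma revList_pairwise {d : ℕ} (hd : Squarefree d) :
    d.primeFactorsList.reverse.Pairwise (fun a b => b < a) := by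
  rw [List.pairwise_reverse]
  have h1 := Nat.primeFactorsList_sorted d
  have h2 : d.primeFactorsList.Nodup :=
    (Nat.squarefree_iff_nodup_primeFactorsList hd.ne_zero).mp hd
  exact (h1.sortedLT_of_nodup h2).pairwise

lemma npred_eq_countP {d : ℕ} (hd : Squarefree d) (t : ℝ) :
    Npred d t = d.primeFactorsList.reverse.countP (fun p : ℕ => decide (t < (p : ℝ))) := by
  have hnd : d.primeFactorsList.reverse.Nodup :=
    List.nodup_reverse.mpr ((Nat.squarefree_iff_nodup_primeFactorsList hd.ne_zero).mp hd)
  unfold Npred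
  have h1 : d.primeFactors = d.primeFactorsList.reverse.toFinset := by
    rw [List.toFinset_reverse]; rfl
  rw [h1, List.countP_eq_length_filter,
    ← List.toFinset_card_of_nodup (hnd.filter _), List.toFinset_filter]
  congr 1
  apply Finset.filter_congr
  intro x _
  simp

lemma pass_iff_npred_lt {d : ℕ} (hd : Squarefree d) (t : ℝ) (m : ℕ) (hm1 : 1 ≤ m) :
    (∀ hm : m - 1 < d.primeFactorsList.reverse.length,
        ((d.primeFactorsList.reverse.get ⟨m - 1, hm⟩ : ℕ) : ℝ) ≤ t) ↔ Npred d t < m := by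
  set L := d.primeFactorsList.reverse with hL
  have hp := revList_pairwise hd
  rw [npred_eq_countP hd, ← hL]
  constructor
  · intro h
    by_contra hcon
    push_neg at hcon
    have hcle : L.countP (fun p : ℕ => decide (t < (p : ℝ))) ≤ L.length :=
      L.countP_le_length
    have hlen : m - 1 < L.length := by omega
    have := (sorted_get_lt_iff t L hp (m - 1) hlen).mpr (by omega)
    exact absurd (h hlen) (not_le.mpr this)
  · intro h hmlen
    have := (sorted_get_lt_iff t L hp (m - 1) hmlen)
    have hnot : ¬ (m - 1 < L.countP (fun p : ℕ => decide (t < (p : ℝ)))) := by omega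
    exact not_lt.mp (fun hc => hnot (this.mp hc))

lemma dplus_iff_npred (ys : ℕ → ℝ) {d : ℕ} (hd : Squarefree d) :
    DPlus ys d ↔ ∀ m : ℕ, Odd m → Npred d (ys m) < m := by
  constructor
  · intro h m hm
    exact (pass_iff_npred_lt hd (ys m) m hm.pos).mp (h.2 m hm)
  · intro h
    exact ⟨hd, fun m hm => (pass_iff_npred_lt hd (ys m) m hm.pos).mpr (h m hm)⟩

lemma exists_failAt (ys : ℕ → ℝ) {d : ℕ}
    (h : ¬ ∀ m : ℕ, Odd m → Npred d (ys m) < m) : ∃ r, FailAt ys r d := by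
  push_neg at h
  obtain ⟨m, hm, hfail⟩ := h
  have hP : ∃ m, Odd m ∧ m ≤ Npred d (ys m) := ⟨m, hm, hfail⟩
  obtain ⟨r, hr⟩ := (Nat.find_spec hP).1
  have hr' : Nat.find hP = 2 * r + 1 := by omega
  refine ⟨r, ?_, ?_⟩
  · intro m' hm' hlt
    by_contra hc
    push_neg at hc
    have := Nat.find_min' hP ⟨hm', hc⟩
    omega
  · rw [← hr']
    exact (Nat.find_spec hP).2

lemma failAt_unique (ys : ℕ → ℝ) {d r r' : ℕ}
    (h : FailAt ys r d) (h' : FailAt ys r' d) : r = r' := by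
  by_contra hne
  rcases Nat.lt_or_ge r r' with hlt | hge
  · have h2 := h.2
    have := h'.1 (2 * r + 1) ⟨r, by omega⟩ (by omega)
    omega
  · have hlt : r' < r := by omega
    have h2 := h'.2
    have := h.1 (2 * r' + 1) ⟨r', by omega⟩ (by omega)
    omega

section Toggle

variable {p d n : ℕ}

lemma not_dvd_div (hp : p.Prime) (hd : Squarefree d) (hpd : p ∣ d) : ¬ p ∣ d / p := by
  intro h
  have hsq : p * p ∣ d := by
    have := mul_dvd_mul h (dvd_refl p)
    rwa [Nat.div_mul_cancel hpd, mul_comm] at this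
  exact hp.not_isUnit (hd p hsq)

lemma mul_dvd_of_not_dvd (hp : p.Prime) (hpd : ¬ p ∣ d) (hdn : d ∣ n) (hpn : p ∣ n) :
    d * p ∣ n :=
  (Nat.Coprime.mul_dvd_of_dvd_of_dvd
    ((Nat.Prime.coprime_iff_not_dvd hp).mpr hpd).symm hdn hpn)

lemma squarefree_mul_prime (hp : p.Prime) (hd : Squarefree d) (hpd : ¬ p ∣ d) :
    Squarefree (d * p) :=
  (Nat.squarefree_mul ((Nat.Prime.coprime_iff_not_dvd hp).mpr hpd).symm).mpr
    ⟨hd, hp.squarefree⟩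

lemma toggle_dvd (hp : p.Prime) (hd : Squarefree d) (hdn : d ∣ n) (hpn : p ∣ n) :
    toggle p d ∣ n := by
  unfold toggle
  split_ifs with h
  · exact dvd_trans (Dvd.intro _ ((Nat.div_mul_cancel h).symm ▸ rfl : d / p * p = d)) hdn
  · exact mul_dvd_of_not_dvd hp h hdn hpn

lemma toggle_squarefree (hp : p.Prime) (hd : Squarefree d) : Squarefree (toggle p d) := by
  unfold toggle
  split_ifs with h
  · exact hd.squarefree_of_dvd (Dvd.intro _ ((Nat.div_mul_cancel h).symm ▸ rfl : d / p * p = d))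
  · exact squarefree_mul_prime hp hd h

lemma toggle_ne (hp : p.Prime) (hd0 : d ≠ 0) : toggle p d ≠ d := by
  unfold toggle
  split_ifs with h
  · exact Nat.ne_of_lt (Nat.div_lt_self (Nat.pos_of_ne_zero hd0) hp.one_lt)
  · intro hc
    nth_rewrite 2 [← mul_one d] at hc
    exact hp.ne_one (Nat.eq_of_mul_eq_mul_left (Nat.pos_of_ne_zero hd0) hc)

lemma toggle_toggle (hp : p.Prime) (hd : Squarefree d) : toggle p (toggle p d) = d := by
  by_cases h : p ∣ d
  · have h1 : ¬ p ∣ d / p := not_dvd_div hp hd h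
    simp only [toggle, if_pos h, if_neg h1]
    exact Nat.div_mul_cancel h
  · have h2 : p ∣ d * p := dvd_mul_left p d
    simp only [toggle, if_neg h, if_pos h2]
    rw [Nat.mul_div_assoc d (dvd_refl p), Nat.div_self hp.pos, mul_one]

lemma primeFactors_mul_prime (hp : p.Prime) (hd0 : d ≠ 0) (hpd : ¬ p ∣ d) :
    (d * p).primeFactors = insert p d.primeFactors ∧ p ∉ d.primeFactors := by
  constructor
  · rw [Nat.primeFactors_mul hd0 hp.ne_zero, hp.primeFactors]
    exact (Finset.union_comm _ _).trans (Finset.insert_eq p d.primeFactors).symm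
  · intro hc
    exact hpd (Nat.dvd_of_mem_primeFactors hc)

lemma moebius_toggle (hp : p.Prime) (hd : Squarefree d) :
    (ArithmeticFunction.moebius (toggle p d) : ℤ) = - ArithmeticFunction.moebius d := by
  have key : ∀ e : ℕ, Squarefree e → ¬ p ∣ e →
      (ArithmeticFunction.moebius (e * p) : ℤ) = - ArithmeticFunction.moebius e := by
    intro e he hpe
    rw [ArithmeticFunction.moebius_apply_of_squarefree (squarefree_mul_prime hp he hpe),
      ArithmeticFunction.moebius_apply_of_squarefree he,
      ArithmeticFunction.cardFactors_mul he.ne_zero hp.ne_zero,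
      ArithmeticFunction.cardFactors_apply_prime hp, pow_succ]
    ring
  unfold toggle
  split_ifs with h
  · have he : Squarefree (d / p) := hd.squarefree_of_dvd ⟨p, (Nat.div_mul_cancel h).symm⟩
    have := key (d / p) he (not_dvd_div hp hd h)
    rw [Nat.div_mul_cancel h] at this
    rw [this]; ring
  · exact key d hd h

lemma npred_toggle (hp : p.Prime) (hd : Squarefree d) {t : ℝ} (hpt : (p : ℝ) ≤ t) :
    Npred (toggle p d) t = Npred d t := by
  have key : ∀ e : ℕ, e ≠ 0 → ¬ p ∣ e → Npred (e * p) t = Npred e t := by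
    intro e he0 hpe
    unfold Npred
    rw [(primeFactors_mul_prime hp he0 hpe).1, Finset.filter_insert,
      if_neg (by push_neg; exact hpt)]
  unfold toggle
  split_ifs with h
  · have he0 : d / p ≠ 0 := by
      intro hc
      exact hd.ne_zero (by rw [← Nat.div_mul_cancel h, hc, zero_mul])
    have := key (d / p) he0 (not_dvd_div hp hd h)
    rw [Nat.div_mul_cancel h] at this
    exact this.symm
  · exact key d hd.ne_zero h

end Toggle

lemma sum_moebius_divisors (n : ℕ) :
    ∑ d ∈ n.divisors, (ArithmeticFunction.moebius d : ℤ) = if n = 1 then 1 else 0 := by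
  have h1 : ((moebius * (zeta : ArithmeticFunction ℕ)) : ArithmeticFunction ℤ) n
      = ∑ d ∈ n.divisors, (moebius d : ℤ) := coe_mul_zeta_apply
  rw [moebius_mul_coe_zeta] at h1
  rw [← h1, ArithmeticFunction.one_apply]

theorem brun_sieve_excess_bound (y γ : ℝ) (hy : 1 < y) (hγ : 0 < γ) (hγ1 : γ < 1)
    (ys : ℕ → ℝ)
    (hys : ∀ m : ℕ, 1 ≤ m → ys m = Real.rpow y ((1 - γ^2) * γ^(m-1) / 2)) :
    ∀ n : ℕ, 1 ≤ n →
      ((rhoPlus ys n : ℝ) - (if ∀ p : ℕ, p.Prime → p ∣ n → y < (p : ℝ) then 1 else 0))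
        ≤ ∑' r : ℕ,
            (if ∀ p : ℕ, p.Prime → p ∣ n → ys (2*r+1) < (p : ℝ) then (1:ℝ) else 0)
              * (2:ℝ) ^ (-(2 * (r:ℤ) + 1)) * (2:ℝ) ^ (2 * n.primeFactors.card) := by
  intro n hn
  have hn0 : n ≠ 0 := by omega
  set W := n.primeFactors.card with hW
  set R := W + 1 with hR
  set S : ℕ → Finset ℕ :=
    fun r => n.divisors.filter (fun d => Squarefree d ∧ FailAt ys r d) with hS
  set term : ℕ → ℝ := fun r =>
    (if ∀ p : ℕ, p.Prime → p ∣ n → ys (2*r+1) < (p : ℝ) then (1:ℝ) else 0)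
      * (2:ℝ) ^ (-(2 * (r:ℤ) + 1)) * (2:ℝ) ^ (2 * W) with hterm
  -- antitonicity of ys
  have hanti : ∀ m m' : ℕ, 1 ≤ m → m ≤ m' → ys m' ≤ ys m := by
    intro m m' h1 h
    rw [hys m h1, hys m' (h1.trans h)]
    apply Real.rpow_le_rpow_of_exponent_le hy.le
    have hγ2 : γ ^ 2 ≤ 1 := pow_le_one₀ hγ.le hγ1.le
    have hpow : γ ^ (m' - 1) ≤ γ ^ (m - 1) :=
      pow_le_pow_of_le_one hγ.le hγ1.le (by omega)
    have h1γ : (0:ℝ) ≤ 1 - γ ^ 2 := by linarith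
    gcongr
  -- facts about membership in S r
  have hmemS : ∀ r d, d ∈ S r ↔ d ∣ n ∧ Squarefree d ∧ FailAt ys r d := by
    intro r d
    rw [hS]
    simp only [Finset.mem_filter, Nat.mem_divisors]
    tauto
  -- the r with FailAt is < R
  have hrR : ∀ r d, d ∈ S r → 2 * r + 1 ≤ W := by
    intro r d hd
    obtain ⟨hdn, hsf, hfail⟩ := (hmemS r d).mp hd
    have h1 : Npred d (ys (2*r+1)) ≤ d.primeFactors.card := Finset.card_filter_le _ _
    have h2 : d.primeFactors.card ≤ W :=
      Finset.card_le_card (Nat.primeFactors_mono hdn hn0)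
    have := hfail.2
    omega
  -- Step 1 : the identity over ℤ
  have key : rhoPlus ys n - (if n = 1 then 1 else 0 : ℤ)
      = ∑ r ∈ Finset.range R, ∑ d ∈ S r, (-(ArithmeticFunction.moebius d) : ℤ) := by
    have h1 : rhoPlus ys n
        = ∑ d ∈ n.divisors.filter (fun d => DPlus ys d), (moebius d : ℤ) :=
      (Finset.sum_filter _ _).symm
    have h3 := Finset.sum_filter_add_sum_filter_not n.divisors
      (fun d => DPlus ys d) (fun d => (moebius d : ℤ))
    rw [sum_moebius_divisors n] at h3
    -- B' = filter (squarefree ∧ ∃ r fail)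
    have hB'B : n.divisors.filter (fun d => Squarefree d ∧ ∃ r, FailAt ys r d)
        ⊆ n.divisors.filter (fun d => ¬ DPlus ys d) := by
      intro d hd
      rw [Finset.mem_filter] at hd ⊢
      obtain ⟨hdn, hsf, r, hfail⟩ := hd
      refine ⟨hdn, fun hD => ?_⟩
      have := ((dplus_iff_npred ys hsf).mp hD) (2*r+1) ⟨r, by omega⟩
      have := hfail.2
      omega
    have hzero : ∀ d ∈ n.divisors.filter (fun d => ¬ DPlus ys d),
        d ∉ n.divisors.filter (fun d => Squarefree d ∧ ∃ r, FailAt ys r d) →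
        (moebius d : ℤ) = 0 := by
      intro d hd hnd
      rw [Finset.mem_filter] at hd hnd
      by_cases hsf : Squarefree d
      · exfalso
        apply hnd
        refine ⟨hd.1, hsf, ?_⟩
        apply exists_failAt ys
        intro hall
        exact hd.2 ((dplus_iff_npred ys hsf).mpr hall)
      · exact moebius_eq_zero_of_not_squarefree hsf
    have hsubs : ∑ d ∈ n.divisors.filter (fun d => Squarefree d ∧ ∃ r, FailAt ys r d),
          (moebius d : ℤ)
        = ∑ d ∈ n.divisors.filter (fun d => ¬ DPlus ys d), (moebius d : ℤ) :=
      Finset.sum_subset hB'B hzero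
    have hBU : n.divisors.filter (fun d => Squarefree d ∧ ∃ r, FailAt ys r d)
        = (Finset.range R).biUnion S := by
      ext d
      simp only [Finset.mem_filter, Finset.mem_biUnion, Finset.mem_range]
      constructor
      · rintro ⟨hdn, hsf, r, hfail⟩
        have hdS : d ∈ S r := (hmemS r d).mpr ⟨Nat.dvd_of_mem_divisors hdn, hsf, hfail⟩
        refine ⟨r, by have := hrR r d hdS; omega, hdS⟩
      · rintro ⟨r, _, hdS⟩
        obtain ⟨hdn, hsf, hfail⟩ := (hmemS r d).mp hdS
        exact ⟨Nat.mem_divisors.mpr ⟨hdn, hn0⟩, hsf, r, hfail⟩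
    have hdisj : (↑(Finset.range R) : Set ℕ).PairwiseDisjoint S := by
      intro r _ r' _ hne
      simp only [Function.onFun]
      rw [Finset.disjoint_left]
      intro d hd hd'
      exact hne (failAt_unique ys ((hmemS r d).mp hd).2.2 ((hmemS r' d).mp hd').2.2)
    have hbiu : ∑ d ∈ (Finset.range R).biUnion S, (moebius d : ℤ)
        = ∑ r ∈ Finset.range R, ∑ d ∈ S r, (moebius d : ℤ) :=
      Finset.sum_biUnion hdisj
    rw [h1]
    have : ∑ d ∈ n.divisors.filter (fun d => ¬ DPlus ys d), (moebius d : ℤ)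
        = ∑ r ∈ Finset.range R, ∑ d ∈ S r, (moebius d : ℤ) := by
      rw [← hsubs, hBU, hbiu]
    have hneg : ∑ r ∈ Finset.range R, ∑ d ∈ S r, (-(moebius d) : ℤ)
        = - ∑ r ∈ Finset.range R, ∑ d ∈ S r, (moebius d : ℤ) := by
      rw [← Finset.sum_neg_distrib]
      exact Finset.sum_congr rfl (fun r _ => by rw [← Finset.sum_neg_distrib])
    rw [hneg, ← this]
    omega
  -- Step 2 : per-r bound over ℝ
  have hper : ∀ r, ((∑ d ∈ S r, (-(ArithmeticFunction.moebius d)) : ℤ) : ℝ) ≤ term r := by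
    intro r
    by_cases hc : ∀ p : ℕ, p.Prime → p ∣ n → ys (2*r+1) < (p : ℝ)
    · rw [hterm]
      simp only [if_pos hc, one_mul]
      rcases Finset.eq_empty_or_nonempty (S r) with hemp | hne
      · rw [hemp]
        simp only [Finset.sum_empty, Int.cast_zero]
        positivity
      · obtain ⟨d₀, hd₀⟩ := hne
        have h2r : 2 * r + 1 ≤ W := hrR r d₀ hd₀
        have hcard : (S r).card ≤ 2 ^ W := by
          have := Finset.card_le_card_of_injOn (t := n.primeFactors.powerset)
            (fun d : ℕ => d.primeFactors)
            (fun d hd => Finset.mem_powerset.mpr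
              (Nat.primeFactors_mono ((hmemS r d).mp hd).1 hn0))
            (fun d hd e he hde => by
              have hds := ((hmemS r d).mp (by exact_mod_cast hd)).2.1
              have hes := ((hmemS r e).mp (by exact_mod_cast he)).2.1
              rw [← Nat.prod_primeFactors_of_squarefree hds,
                  ← Nat.prod_primeFactors_of_squarefree hes]
              exact Finset.prod_congr hde (fun _ _ => rfl))
          simpa [Finset.card_powerset] using this
        have hsum : (∑ d ∈ S r, (-(ArithmeticFunction.moebius d)) : ℤ) ≤ (S r).card := by
          have hb : ∀ d ∈ S r, (-(ArithmeticFunction.moebius d) : ℤ) ≤ 1 := by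
            intro d hd
            have hds := ((hmemS r d).mp hd).2.1
            rw [moebius_apply_of_squarefree hds]
            rcases neg_one_pow_eq_or ℤ (cardFactors d) with h | h <;> rw [h] <;> norm_num
          calc (∑ d ∈ S r, (-(ArithmeticFunction.moebius d)) : ℤ)
              ≤ (S r).card • (1:ℤ) := Finset.sum_le_card_nsmul _ _ 1 hb
            _ = (S r).card := by simp
        calc ((∑ d ∈ S r, -(ArithmeticFunction.moebius d) : ℤ) : ℝ)
            ≤ ((S r).card : ℝ) := by exact_mod_cast hsum
          _ ≤ (2:ℝ)^W := by exact_mod_cast hcard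
          _ ≤ (2:ℝ)^(-(2*(r:ℤ)+1)) * 2^(2*W) := by
              have h1 : (2:ℝ)^(-(2*(r:ℤ)+1)) = ((2:ℝ)^(2*r+1))⁻¹ := by
                rw [← zpow_neg_one, ← zpow_natCast (2:ℝ) (2*r+1), ← zpow_mul]
                congr 1
                push_cast
                ring
              rw [h1, inv_mul_eq_div, le_div_iff₀ (by positivity), ← pow_add]
              apply pow_le_pow_right₀ (by norm_num)
              omega
    · push_neg at hc
      obtain ⟨p, hp, hpn, hple⟩ := hc
      have hic : ¬ ∀ p : ℕ, p.Prime → p ∣ n → ys (2*r+1) < (p : ℝ) := by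
        push_neg
        exact ⟨p, hp, hpn, hple⟩
      simp only [hterm]
      simp only [if_neg hic, zero_mul]
      have hzero : (∑ d ∈ S r, (-(ArithmeticFunction.moebius d)) : ℤ) = 0 := by
        apply Finset.sum_involution (g := fun d _ => toggle p d)
        · intro d hd
          have hds := ((hmemS r d).mp hd).2.1
          rw [moebius_toggle hp hds]
          ring
        · intro d hd hne0
          exact toggle_ne hp (((hmemS r d).mp hd).2.1).ne_zero
        · intro d hd
          obtain ⟨hdn, hds, hfail⟩ := (hmemS r d).mp hd
          refine (hmemS r (toggle p d)).mpr
            ⟨toggle_dvd hp hds hdn hpn, toggle_squarefree hp hds, ?_, ?_⟩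
          · intro m hm hmlt
            have hm1 : 1 ≤ m := hm.pos
            have hmt : (p : ℝ) ≤ ys m :=
              hple.trans (hanti m (2*r+1) hm1 (by omega))
            rw [npred_toggle hp hds hmt]
            exact hfail.1 m hm hmlt
          · rw [npred_toggle hp hds hple]
            exact hfail.2
        · intro d hd
          exact toggle_toggle hp (((hmemS r d).mp hd).2.1)
      rw [hzero]
      simp
  -- nonnegativity and summability of term
  have htnn : ∀ r, 0 ≤ term r := by
    intro r
    simp only [hterm]
    have : (0:ℝ) ≤ (if ∀ p : ℕ, p.Prime → p ∣ n → ys (2*r+1) < (p : ℝ)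
        then (1:ℝ) else 0) := by split <;> norm_num
    have h2 : (0:ℝ) ≤ (2:ℝ)^(-(2*(r:ℤ)+1)) := by positivity
    have h3 : (0:ℝ) ≤ (2:ℝ)^(2*W) := by positivity
    exact mul_nonneg (mul_nonneg this h2) h3
  have hgsum : Summable (fun r : ℕ => (2:ℝ)^(2*W) * ((1:ℝ)/4)^r) :=
    (summable_geometric_of_lt_one (by norm_num) (by norm_num)).mul_left _
  have hbound : ∀ r : ℕ, term r ≤ (2:ℝ)^(2*W) * ((1:ℝ)/4)^r := by
    intro r
    simp only [hterm]
    have hle1 : (if ∀ p : ℕ, p.Prime → p ∣ n → ys (2*r+1) < (p : ℝ)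
        then (1:ℝ) else 0) ≤ 1 := by split <;> norm_num
    have hnn1 : (0:ℝ) ≤ (if ∀ p : ℕ, p.Prime → p ∣ n → ys (2*r+1) < (p : ℝ)
        then (1:ℝ) else 0) := by split <;> norm_num
    have hz : (2:ℝ)^(-(2*(r:ℤ)+1)) ≤ ((1:ℝ)/4)^r := by
      have e1 : (2:ℝ)^(-(2*(r:ℤ)+1)) = ((2:ℝ)^(2*r+1))⁻¹ := by
        rw [← zpow_neg_one, ← zpow_natCast (2:ℝ) (2*r+1), ← zpow_mul]
        congr 1
        push_cast
        ring
      have e2 : ((1:ℝ)/4)^r = ((2:ℝ)^(2*r))⁻¹ := by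
        rw [pow_mul, ← inv_pow]
        norm_num
      rw [e1, e2]
      apply inv_anti₀ (by positivity)
      apply pow_le_pow_right₀ (by norm_num)
      omega
    calc (if ∀ p : ℕ, p.Prime → p ∣ n → ys (2*r+1) < (p : ℝ) then (1:ℝ) else 0)
          * (2:ℝ)^(-(2*(r:ℤ)+1)) * (2:ℝ)^(2*W)
        ≤ 1 * ((1:ℝ)/4)^r * (2:ℝ)^(2*W) := by
          apply mul_le_mul_of_nonneg_right _ (by positivity)
          exact mul_le_mul hle1 hz (by positivity) (by norm_num)
      _ = (2:ℝ)^(2*W) * ((1:ℝ)/4)^r := by ring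
  have hsummable : Summable term := Summable.of_nonneg_of_le htnn hbound hgsum
  -- indicator comparison
  have hind : ((if n = 1 then 1 else 0 : ℤ) : ℝ)
      ≤ (if ∀ p : ℕ, p.Prime → p ∣ n → y < (p : ℝ) then (1:ℝ) else 0) := by
    by_cases h1 : n = 1
    · have hall : ∀ p : ℕ, p.Prime → p ∣ n → y < (p : ℝ) := by
        intro p hp hpn
        rw [h1] at hpn
        exact absurd (Nat.dvd_one.mp hpn) hp.ne_one
      rw [if_pos h1, if_pos hall]
      norm_num
    · rw [if_neg h1]
      split <;> norm_num
  -- final assembly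
  calc ((rhoPlus ys n : ℝ) - (if ∀ p : ℕ, p.Prime → p ∣ n → y < (p : ℝ) then 1 else 0))
      ≤ (rhoPlus ys n : ℝ) - ((if n = 1 then 1 else 0 : ℤ) : ℝ) := by linarith
    _ = ((rhoPlus ys n - (if n = 1 then 1 else 0 : ℤ) : ℤ) : ℝ) := by push_cast; ring
    _ = ∑ r ∈ Finset.range R, ((∑ d ∈ S r, (-(ArithmeticFunction.moebius d)) : ℤ) : ℝ) := by
        rw [key]
        push_cast
        ring
    _ ≤ ∑ r ∈ Finset.range R, term r := Finset.sum_le_sum (fun r _ => hper r)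
    _ ≤ ∑' r : ℕ, term r := Summable.sum_le_tsum _ (fun r _ => htnn r) hsummable
end

section
/- Let g : ℕ → ℝ≥0 be a multiplicative function supported on squarefree numbers (g(p^ν) = 0 for ν ≥ 2) with g(p) ≤ 1 for all p. Then for all x ≥ 1, ∑_{n ≤ x} g(n) ≤ x·∏_{p ≤ x} (1 − 1/p)(1 + g(p)/p) · C for some absolute constant C. In particular, for the indicator g(n) = μ(n)²·1_{λ(p)≠0 ∀ p|n} one gets #{n ≤ x : n squarefree, λ(p) ≠ 0 for all p | n} ≪ x·∏_{p ≤ x, λ(p)=0}(1 − 1/p). -/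
open scoped Classical

open Finset ArithmeticFunction

namespace MeanValueAux

/-! ### Divisor-sum swapping -/

lemma swap_div (x : ℕ) (F : ℕ → ℕ → ℝ) :
    ∑ n ∈ Finset.Icc 1 x, ∑ d ∈ n.divisors, F d n
      = ∑ d ∈ Finset.Icc 1 x, ∑ q ∈ Finset.Icc 1 (x / d), F d (d * q) := by
  rw [Finset.sum_sigma', Finset.sum_sigma']
  refine Finset.sum_nbij' (fun p => ⟨p.2, p.1 / p.2⟩) (fun p => ⟨p.1 * p.2, p.1⟩) ?_ ?_ ?_ ?_ ?_
  · rintro ⟨n, d⟩ h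
    simp only [Finset.mem_sigma, Finset.mem_Icc, Nat.mem_divisors] at h ⊢
    obtain ⟨⟨h1, h2⟩, hd, hn0⟩ := h
    have hd0 : 0 < d := Nat.pos_of_dvd_of_pos hd (by omega)
    refine ⟨⟨hd0, le_trans (Nat.le_of_dvd (by omega) hd) h2⟩, ?_, Nat.div_le_div_right h2⟩
    exact Nat.one_le_div_iff hd0 |>.2 (Nat.le_of_dvd (by omega) hd)
  · rintro ⟨d, q⟩ h
    simp only [Finset.mem_sigma, Finset.mem_Icc, Nat.mem_divisors] at h ⊢
    obtain ⟨⟨h1, h2⟩, h3, h4⟩ := h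
    have : d * q ≤ x := le_trans (Nat.mul_le_mul_left d h4) (Nat.mul_div_le x d)
    exact ⟨⟨Nat.one_le_iff_ne_zero.2 (by positivity), this⟩, Dvd.intro q rfl, by positivity⟩
  · rintro ⟨n, d⟩ h
    simp only [Finset.mem_sigma, Finset.mem_Icc, Nat.mem_divisors] at h
    simp [Nat.mul_div_cancel' h.2.1]
  · rintro ⟨d, q⟩ h
    simp only [Finset.mem_sigma, Finset.mem_Icc] at h
    simp [Nat.mul_div_cancel_left _ (by omega : 0 < d)]
  · rintro ⟨n, d⟩ h
    simp only [Finset.mem_sigma, Finset.mem_Icc, Nat.mem_divisors] at h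
    simp [Nat.mul_div_cancel' h.2.1]

/-! ### Chebyshev bounds -/

lemma primes_Icc_eq (N : ℕ) :
    (Finset.Icc 1 N).filter Nat.Prime = (Finset.range (N+1)).filter Nat.Prime := by
  ext p
  simp only [Finset.mem_filter, Finset.mem_Icc, Finset.mem_range]
  constructor
  · rintro ⟨⟨h1, h2⟩, hp⟩; exact ⟨by omega, hp⟩
  · rintro ⟨h1, hp⟩; exact ⟨⟨hp.one_lt.le.trans' (by omega), by omega⟩, hp⟩

lemma theta_le (N : ℕ) :
    ∑ p ∈ (Finset.Icc 1 N).filter Nat.Prime, Real.log p ≤ N * Real.log 4 := by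
  rw [primes_Icc_eq]
  rw [← Real.log_prod (fun p hp => by
    exact_mod_cast (Nat.Prime.pos (Finset.mem_filter.1 hp).2).ne')]
  have h1 : (∏ p ∈ (Finset.range (N+1)).filter Nat.Prime, (p:ℝ)) = (primorial N : ℝ) := by
    rw [primorial]; push_cast; rfl
  rw [h1]
  calc Real.log (primorial N : ℝ) ≤ Real.log ((4:ℝ)^N) := by
        apply Real.log_le_log (by exact_mod_cast primorial_pos N)
        exact_mod_cast primorial_le_4_pow N
    _ = N * Real.log 4 := by rw [Real.log_pow]

lemma aux_real (N : ℕ) (h : 1 ≤ N) :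
    (Nat.sqrt N : ℝ) * ((Nat.log 2 N : ℝ) * Real.log N) ≤ 24 * N := by
  have hN0 : (0:ℝ) < N := by exact_mod_cast h
  have hN1 : (1:ℝ) ≤ N := by exact_mod_cast h
  have hs : (Nat.sqrt N : ℝ) ≤ Real.sqrt N := Real.nat_sqrt_le_real_sqrt
  have hlog2 : (0.6931471803 : ℝ) < Real.log 2 := Real.log_two_gt_d9
  have hl2 : (Nat.log 2 N : ℝ) * Real.log 2 ≤ Real.log N := by
    calc (Nat.log 2 N : ℝ) * Real.log 2 = Real.log ((2:ℝ)^(Nat.log 2 N)) := by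
          rw [Real.log_pow]
      _ ≤ Real.log N := by
          apply Real.log_le_log (by positivity)
          exact_mod_cast Nat.pow_log_le_self 2 (by omega)
  have hlogN : 0 ≤ Real.log N := Real.log_nonneg hN1
  have hL4 : Real.log N ≤ 4 * (N:ℝ)^(4⁻¹:ℝ) := by
    have h1 : Real.log N = 4 * Real.log ((N:ℝ)^(4⁻¹:ℝ)) := by
      rw [Real.log_rpow hN0]; ring
    rw [h1]
    have := Real.log_le_sub_one_of_pos (x := (N:ℝ)^(4⁻¹:ℝ)) (by positivity)
    nlinarith [Real.rpow_nonneg hN0.le (4⁻¹:ℝ)]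
  have hq : (N:ℝ)^(4⁻¹:ℝ) * (N:ℝ)^(4⁻¹:ℝ) = Real.sqrt N := by
    rw [← Real.rpow_add hN0, Real.sqrt_eq_rpow]; norm_num
  have hss : Real.sqrt N * Real.sqrt N = N := Real.mul_self_sqrt hN0.le
  have hsq : 0 ≤ Real.sqrt N := Real.sqrt_nonneg _
  have hnl : (0:ℝ) ≤ (Nat.log 2 N : ℝ) := by positivity
  have hns : (0:ℝ) ≤ (Nat.sqrt N : ℝ) := by positivity
  have hrp : (0:ℝ) ≤ (N:ℝ)^(4⁻¹:ℝ) := by positivity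
  have hA : (Nat.sqrt N : ℝ) * ((Nat.log 2 N : ℝ) * Real.log N)
      ≤ Real.sqrt N * ((Nat.log 2 N : ℝ) * Real.log N) :=
    mul_le_mul_of_nonneg_right hs (mul_nonneg hnl hlogN)
  have hB : (Nat.log 2 N : ℝ) * Real.log 2 * Real.log N ≤ Real.log N * Real.log N :=
    mul_le_mul_of_nonneg_right hl2 hlogN
  have hC : Real.log N * Real.log N ≤ (4 * (N:ℝ)^(4⁻¹:ℝ)) * (4 * (N:ℝ)^(4⁻¹:ℝ)) :=
    mul_le_mul hL4 hL4 hlogN (by positivity)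
  nlinarith [mul_le_mul_of_nonneg_left (hB.trans hC) hsq, hlog2]

lemma card_pp (N : ℕ) :
    (((Finset.Icc 1 N).filter (fun n => ¬ n.Prime)).filter (fun n => Λ n ≠ 0)).card
      ≤ Nat.sqrt N * Nat.log 2 N := by
  classical
  set t := ((Finset.Icc 1 N).filter (fun n => ¬ n.Prime)).filter (fun n => Λ n ≠ 0) with ht
  have key : ∀ n ∈ t, ∃ p k : ℕ, p.Prime ∧ 2 ≤ k ∧ p ^ k = n := by
    intro n hn
    simp only [ht, Finset.mem_filter, Finset.mem_Icc] at hn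
    obtain ⟨⟨⟨h1, h2⟩, hnp⟩, hΛ⟩ := hn
    obtain ⟨p, k, hp, hk, hpk⟩ := (ArithmeticFunction.vonMangoldt_ne_zero_iff).1 hΛ
    refine ⟨p, k, Nat.prime_iff.mpr hp, ?_, hpk⟩
    rcases Nat.lt_or_ge k 2 with h | h
    · exfalso
      have hk1 : k = 1 := by omega
      rw [hk1, pow_one] at hpk
      exact hnp (hpk ▸ Nat.prime_iff.mpr hp)
    · exact h
  have hinj : ∀ n ∈ t, (n.minFac, n.factorization n.minFac)
      ∈ Finset.Icc 1 (Nat.sqrt N) ×ˢ Finset.Icc 2 (Nat.log 2 N) := by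
    intro n hn
    obtain ⟨p, k, hp, hk, hpk⟩ := key n hn
    simp only [ht, Finset.mem_filter, Finset.mem_Icc] at hn
    obtain ⟨⟨⟨h1, h2⟩, _⟩, _⟩ := hn
    have hmf : n.minFac = p := by rw [← hpk]; exact Nat.Prime.pow_minFac hp (by omega)
    have hfa : n.factorization p = k := by
      rw [← hpk, Nat.Prime.factorization_pow hp]; simp
    simp only [Finset.mem_product, Finset.mem_Icc, hmf, hfa]
    refine ⟨⟨hp.one_lt.le.trans' (by omega), ?_⟩, hk, ?_⟩
    · rw [Nat.le_sqrt]
      calc p * p = p ^ 2 := (sq p).symm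
        _ ≤ p ^ k := Nat.pow_le_pow_right hp.pos hk
        _ = n := hpk
        _ ≤ N := h2
    · rw [Nat.le_log_iff_pow_le one_lt_two (by omega)]
      calc 2 ^ k ≤ p ^ k := Nat.pow_le_pow_left hp.two_le k
        _ = n := hpk
        _ ≤ N := h2
  calc t.card ≤ (Finset.Icc 1 (Nat.sqrt N) ×ˢ Finset.Icc 2 (Nat.log 2 N)).card := by
        apply Finset.card_le_card_of_injOn (fun n => (n.minFac, n.factorization n.minFac)) (fun n hn => hinj n hn)
        intro a ha b hb hab
        obtain ⟨p, k, hp, hk, hpk⟩ := key a ha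
        obtain ⟨p', k', hp', hk', hpk'⟩ := key b hb
        have h1 : a.minFac = p := by rw [← hpk]; exact Nat.Prime.pow_minFac hp (by omega)
        have h2 : a.factorization p = k := by
          rw [← hpk, Nat.Prime.factorization_pow hp]; simp
        have h3 : b.minFac = p' := by rw [← hpk']; exact Nat.Prime.pow_minFac hp' (by omega)
        have h4 : b.factorization p' = k' := by
          rw [← hpk', Nat.Prime.factorization_pow hp']; simp
        simp only [Prod.mk.injEq] at hab
        rw [h1, h3] at hab
        obtain ⟨hpp, hkk⟩ := hab
        rw [h4, h2] at hkk
        rw [← hpk, ← hpk', hpp, hkk]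
    _ ≤ Nat.sqrt N * Nat.log 2 N := by
        rw [Finset.card_product, Nat.card_Icc, Nat.card_Icc]
        apply Nat.mul_le_mul <;> omega

lemma psi_le (N : ℕ) : ∑ n ∈ Finset.Icc 1 N, Λ n ≤ 27 * N := by
  rcases Nat.eq_zero_or_pos N with rfl | hN
  · simp
  rw [← Finset.sum_filter_add_sum_filter_not (Finset.Icc 1 N) Nat.Prime]
  have h1 : ∑ p ∈ (Finset.Icc 1 N).filter Nat.Prime, Λ p ≤ 3 * N := by
    calc ∑ p ∈ (Finset.Icc 1 N).filter Nat.Prime, Λ p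
        = ∑ p ∈ (Finset.Icc 1 N).filter Nat.Prime, Real.log p := by
          apply Finset.sum_congr rfl
          intro p hp
          exact ArithmeticFunction.vonMangoldt_apply_prime (Finset.mem_filter.1 hp).2
      _ ≤ N * Real.log 4 := theta_le N
      _ ≤ N * 3 := by
          apply mul_le_mul_of_nonneg_left _ (Nat.cast_nonneg N)
          nlinarith [Real.log_le_sub_one_of_pos (by norm_num : (0:ℝ) < 4)]
      _ = 3 * N := by ring
  have h2 : ∑ n ∈ (Finset.Icc 1 N).filter (fun n => ¬ n.Prime), Λ n ≤ 24 * N := by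
    rw [← Finset.sum_filter_ne_zero]
    set t := ((Finset.Icc 1 N).filter (fun n => ¬ n.Prime)).filter (fun n => Λ n ≠ 0) with htdef
    have hb : ∀ n ∈ t, Λ n ≤ Real.log N := by
      intro n hn
      simp only [htdef, Finset.mem_filter, Finset.mem_Icc] at hn
      calc Λ n ≤ Real.log n := ArithmeticFunction.vonMangoldt_le_log
        _ ≤ Real.log N := Real.log_le_log (by exact_mod_cast hn.1.1.1) (by exact_mod_cast hn.1.1.2)
    calc ∑ n ∈ t, Λ n ≤ t.card • Real.log N := Finset.sum_le_card_nsmul t _ _ hb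
      _ = (t.card : ℝ) * Real.log N := nsmul_eq_mul _ _
      _ ≤ (Nat.sqrt N * Nat.log 2 N : ℕ) * Real.log N := by
          apply mul_le_mul_of_nonneg_right _ (Real.log_nonneg (by exact_mod_cast hN))
          exact_mod_cast card_pp N
      _ ≤ 24 * N := by
          push_cast
          rw [mul_assoc]
          exact aux_real N hN
  linarith

/-! ### Mertens' theorems -/

lemma mertens1 (N : ℕ) (hN : 1 ≤ N) :
    ∑ d ∈ Finset.Icc 1 N, Λ d / d ≤ Real.log N + 27 := by
  have hNR : (0:ℝ) < N := by exact_mod_cast hN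
  have key : ∑ d ∈ Finset.Icc 1 N, Λ d * ((N/d : ℕ) : ℝ)
      = ∑ n ∈ Finset.Icc 1 N, Real.log n := by
    calc ∑ d ∈ Finset.Icc 1 N, Λ d * ((N/d : ℕ) : ℝ)
        = ∑ d ∈ Finset.Icc 1 N, ∑ q ∈ Finset.Icc 1 (N/d), Λ d := by
          apply Finset.sum_congr rfl
          intro d _
          rw [Finset.sum_const, Nat.card_Icc, nsmul_eq_mul]
          simp [mul_comm]
      _ = ∑ n ∈ Finset.Icc 1 N, ∑ d ∈ n.divisors, Λ d :=
          (swap_div N (fun d _ => Λ d)).symm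
      _ = ∑ n ∈ Finset.Icc 1 N, Real.log n := by
          apply Finset.sum_congr rfl
          intro n _
          exact ArithmeticFunction.vonMangoldt_sum
  have hlow : ∀ d ∈ Finset.Icc 1 N, (N:ℝ) * (Λ d / d) - Λ d ≤ Λ d * ((N/d : ℕ) : ℝ) := by
    intro d hd
    rw [Finset.mem_Icc] at hd
    have hd0 : 0 < d := hd.1
    have hfl : (N:ℝ)/d - 1 ≤ ((N/d : ℕ) : ℝ) := by
      have h1 : N < d * (N / d + 1) := by
        calc N = d * (N / d) + N % d := (Nat.div_add_mod N d).symm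
          _ < d * (N / d) + d := by exact Nat.add_lt_add_left (Nat.mod_lt N hd0) _
          _ = d * (N / d + 1) := by ring
      have h4 : (N:ℝ) < d * ((N/d : ℕ) + 1) := by exact_mod_cast h1
      have hd0R : (0:ℝ) < d := by exact_mod_cast hd0
      rw [div_sub_one hd0R.ne', div_le_iff₀ hd0R]
      nlinarith
    have hΛ : 0 ≤ Λ d := ArithmeticFunction.vonMangoldt_nonneg
    have := mul_le_mul_of_nonneg_left hfl hΛ
    calc (N:ℝ) * (Λ d / d) - Λ d = Λ d * ((N:ℝ)/d - 1) := by field_simp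
      _ ≤ Λ d * ((N/d : ℕ) : ℝ) := this
  have hup : ∑ n ∈ Finset.Icc 1 N, Real.log n ≤ N * Real.log N := by
    calc ∑ n ∈ Finset.Icc 1 N, Real.log n ≤ ∑ n ∈ Finset.Icc 1 N, Real.log N := by
          apply Finset.sum_le_sum
          intro n hn
          rw [Finset.mem_Icc] at hn
          exact Real.log_le_log (by exact_mod_cast hn.1) (by exact_mod_cast hn.2)
      _ = (Finset.Icc 1 N).card * Real.log N := by rw [Finset.sum_const, nsmul_eq_mul]
      _ = N * Real.log N := by rw [Nat.card_Icc]; norm_num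
  have hsum := Finset.sum_le_sum hlow
  rw [Finset.sum_sub_distrib, ← Finset.mul_sum, key] at hsum
  have hψ := psi_le N
  have hfin : (N:ℝ) * ∑ d ∈ Finset.Icc 1 N, Λ d / d ≤ N * Real.log N + 27 * N := by linarith
  exact le_of_mul_le_mul_left
    (by linarith [hfin] :
      (N:ℝ) * ∑ d ∈ Finset.Icc 1 N, Λ d / d ≤ (N:ℝ) * (Real.log N + 27)) hNR

noncomputable def Bsum (N : ℕ) : ℝ := ∑ n ∈ Finset.Icc 1 N, Λ n / (n * Real.log n)
noncomputable def Asum (N : ℕ) : ℝ := ∑ d ∈ Finset.Icc 1 N, Λ d / d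

lemma mertens1' (N : ℕ) (hN : 1 ≤ N) : Asum N ≤ Real.log N + 27 := mertens1 N hN

lemma Bsum_le (N : ℕ) (hN : 2 ≤ N) :
    Bsum N ≤ (Asum N - 27) / Real.log N + Real.log (Real.log N) + (27 / Real.log 2 + 1) := by
  induction N, hN using Nat.le_induction with
  | base =>
      have h2 : Real.log 2 > 0 := Real.log_pos (by norm_num)
      have hB : Bsum 2 = 1/2 := by
        rw [Bsum]
        rw [show Finset.Icc 1 2 = {1, 2} by rfl]
        rw [Finset.sum_insert (by norm_num), Finset.sum_singleton]
        rw [ArithmeticFunction.vonMangoldt_apply_prime Nat.prime_two]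
        simp [ArithmeticFunction.vonMangoldt_apply_one]
        field_simp
      have hA : Asum 2 = Real.log 2 / 2 := by
        rw [Asum]
        rw [show Finset.Icc 1 2 = {1, 2} by rfl]
        rw [Finset.sum_insert (by norm_num), Finset.sum_singleton]
        rw [ArithmeticFunction.vonMangoldt_apply_prime Nat.prime_two]
        simp [ArithmeticFunction.vonMangoldt_apply_one]
      have hll : Real.log (Real.log 2) ≥ -1 := by
        have he : Real.exp (-1) ≤ Real.log 2 := by
          have h1 : Real.exp (-1) = 1 / Real.exp 1 := by
            rw [Real.exp_neg]; ring
          have h2' : (2.7182818283:ℝ) < Real.exp 1 := Real.exp_one_gt_d9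
          have h3 : Real.log 2 > 0.6931471803 := Real.log_two_gt_d9
          rw [h1]
          have : 1 / Real.exp 1 < 1 / 2.7182818283 := by
            apply div_lt_div_of_pos_left one_pos (by norm_num) h2'
          nlinarith
        calc (-1:ℝ) = Real.log (Real.exp (-1)) := (Real.log_exp _).symm
          _ ≤ Real.log (Real.log 2) := Real.log_le_log (Real.exp_pos _) he
      push_cast
      rw [hB, hA]
      have : (Real.log 2 / 2 - 27) / Real.log 2 = 1/2 - 27 / Real.log 2 := by
        field_simp
      rw [this]
      linarith
  | succ N hN2 ih =>
      have hu : 0 < Real.log N := Real.log_pos (by exact_mod_cast hN2)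
      have huv : Real.log N ≤ Real.log (N+1) := by
        apply Real.log_le_log (by positivity)
        push_cast; linarith
      have hv : 0 < Real.log (N+1) := lt_of_lt_of_le hu huv
      have hBstep : Bsum (N+1) = Bsum N + Λ (N+1) / ((N+1) * Real.log (N+1)) := by
        rw [Bsum, Bsum, Finset.sum_Icc_succ_top (by omega : 1 ≤ N+1)]
        norm_cast
      have hAstep : Asum (N+1) = Asum N + Λ (N+1) / (N+1) := by
        rw [Asum, Asum, Finset.sum_Icc_succ_top (by omega : 1 ≤ N+1)]
        norm_cast
      have hkey : (Asum N - 27) * (1 / Real.log N - 1 / Real.log (N+1))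
          ≤ Real.log (Real.log (N+1)) - Real.log (Real.log N) := by
        have hrhs : (Real.log (N+1) - Real.log N) / Real.log (N+1)
            ≤ Real.log (Real.log (N+1)) - Real.log (Real.log N) := by
          have h1 := Real.log_le_sub_one_of_pos
            (show (0:ℝ) < Real.log N / Real.log (N+1) by positivity)
          rw [Real.log_div hu.ne' hv.ne'] at h1
          have h2 : Real.log N / Real.log (N+1) - 1
              = -((Real.log (N+1) - Real.log N) / Real.log (N+1)) := by
            field_simp
            ring
          rw [h2] at h1
          linarith
        rcases le_or_gt (Asum N) 27 with hA | hA
        · have h1 : 1 / Real.log (N+1) ≤ 1 / Real.log N :=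
            one_div_le_one_div_of_le hu huv
          have h2 : (Asum N - 27) * (1 / Real.log N - 1 / Real.log (N+1)) ≤ 0 :=
            mul_nonpos_of_nonpos_of_nonneg (by linarith) (by linarith)
          have h3 : 0 ≤ Real.log (Real.log (N+1)) - Real.log (Real.log N) := by
            apply sub_nonneg.2
            exact Real.log_le_log hu huv
          linarith
        · have hAu : Asum N - 27 ≤ Real.log N := by
            have := mertens1' N (by omega)
            linarith
          calc (Asum N - 27) * (1 / Real.log N - 1 / Real.log (N+1))
              ≤ Real.log N * (1 / Real.log N - 1 / Real.log (N+1)) := by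
                apply mul_le_mul_of_nonneg_right hAu
                have : 1 / Real.log (N+1) ≤ 1 / Real.log N :=
                  one_div_le_one_div_of_le hu huv
                linarith
            _ = (Real.log (N+1) - Real.log N) / Real.log (N+1) := by
                field_simp
            _ ≤ _ := hrhs
      have hΛpos : 0 ≤ Λ (N+1) / ((N+1 : ℕ) * Real.log (N+1)) :=
        div_nonneg ArithmeticFunction.vonMangoldt_nonneg (by positivity)
      rw [hBstep, hAstep]
      push_cast
      have expand : (Asum N + Λ (N+1) / (N+1) - 27) / Real.log (N+1)
          = (Asum N - 27) / Real.log (N+1) + Λ (N+1) / ((N+1) * Real.log (N+1)) := by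
        field_simp
        ring
      rw [expand]
      have hdiv : (Asum N - 27) / Real.log N - (Asum N - 27) / Real.log (N+1)
          = (Asum N - 27) * (1 / Real.log N - 1 / Real.log (N+1)) := by
        field_simp
      push_cast at ih ⊢
      linarith [hkey, ih]

lemma mertens2 (N : ℕ) (hN : 2 ≤ N) :
    ∑ p ∈ (Finset.Icc 1 N).filter Nat.Prime, 1/(p:ℝ)
      ≤ Real.log (Real.log N) + (27 / Real.log 2 + 2) := by
  have hu : 0 < Real.log N := Real.log_pos (by exact_mod_cast hN)
  have h1 : ∑ p ∈ (Finset.Icc 1 N).filter Nat.Prime, 1/(p:ℝ) ≤ Bsum N := by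
    rw [Bsum, ← Finset.sum_filter_add_sum_filter_not (Finset.Icc 1 N) Nat.Prime
      (fun n => Λ n / (n * Real.log n))]
    have e1 : ∑ p ∈ (Finset.Icc 1 N).filter Nat.Prime, 1/(p:ℝ)
        = ∑ p ∈ (Finset.Icc 1 N).filter Nat.Prime, Λ p / (p * Real.log p) := by
      apply Finset.sum_congr rfl
      intro p hp
      have hp' := (Finset.mem_filter.1 hp).2
      rw [ArithmeticFunction.vonMangoldt_apply_prime hp']
      have hlp : 0 < Real.log p := Real.log_pos (by exact_mod_cast hp'.one_lt)
      have hp0 : (0:ℝ) < p := by exact_mod_cast hp'.pos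
      field_simp
    rw [e1]
    have e2 : 0 ≤ ∑ n ∈ (Finset.Icc 1 N).filter (fun n => ¬ n.Prime),
        Λ n / (n * Real.log n) := by
      apply Finset.sum_nonneg
      intro n hn
      have hn' := Finset.mem_filter.1 hn
      have h1n : 1 ≤ n := (Finset.mem_Icc.1 hn'.1).1
      rcases Nat.eq_or_lt_of_le h1n with h | h
      · simp [← h]
      · apply div_nonneg ArithmeticFunction.vonMangoldt_nonneg
        apply mul_nonneg (by positivity)
        exact Real.log_nonneg (by exact_mod_cast h1n)
    linarith
  have h2 := Bsum_le N hN
  have h3 : (Asum N - 27) / Real.log N ≤ 1 := by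
    rcases le_or_gt (Asum N) 27 with h | h
    · exact le_trans (div_nonpos_of_nonpos_of_nonneg (by linarith) hu.le) zero_le_one
    · rw [div_le_one hu]
      linarith [mertens1' N (by omega)]
  linarith

lemma tele (N : ℕ) (hN : 1 ≤ N) :
    ∑ n ∈ Finset.Icc 2 N, 1/((n:ℝ)*((n:ℝ)-1)) = 1 - 1/N := by
  induction N, hN using Nat.le_induction with
  | base => norm_num
  | succ N hN2 ih =>
      rw [Finset.sum_Icc_succ_top (by omega : 2 ≤ N+1), ih]
      have h1 : (0:ℝ) < N := by exact_mod_cast hN2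
      push_cast
      field_simp
      ring_nf
      rw [mul_inv_cancel₀ h1.ne']
      ring

lemma mertens3 (N : ℕ) (hN : 2 ≤ N) :
    Real.exp (-(27 / Real.log 2 + 3)) / Real.log N
      ≤ ∏ p ∈ (Finset.Icc 1 N).filter Nat.Prime, (1 - 1/(p:ℝ)) := by
  have hu : 0 < Real.log N := Real.log_pos (by exact_mod_cast hN)
  set s := (Finset.Icc 1 N).filter Nat.Prime with hs
  have hp2 : ∀ p ∈ s, (2:ℝ) ≤ (p:ℝ) := by
    intro p hp
    exact_mod_cast (Finset.mem_filter.1 hp).2.two_le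
  have hsum : ∑ p ∈ s, 1/((p:ℝ)-1) ≤ Real.log (Real.log N) + (27 / Real.log 2 + 3) := by
    have e1 : ∀ p ∈ s, 1/((p:ℝ)-1) = 1/(p:ℝ) + 1/((p:ℝ)*((p:ℝ)-1)) := by
      intro p hp
      have h2 := hp2 p hp
      have hp0 : (p:ℝ) ≠ 0 := by linarith
      have hp1 : (p:ℝ) - 1 ≠ 0 := by linarith
      field_simp
      ring
    rw [Finset.sum_congr rfl e1, Finset.sum_add_distrib]
    have h2 : ∑ p ∈ s, 1/((p:ℝ)*((p:ℝ)-1)) ≤ 1 := by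
      have hsub : s ⊆ Finset.Icc 2 N := by
        intro p hp
        simp only [hs, Finset.mem_filter, Finset.mem_Icc] at hp
        rw [Finset.mem_Icc]
        exact ⟨hp.2.two_le, hp.1.2⟩
      calc ∑ p ∈ s, 1/((p:ℝ)*((p:ℝ)-1))
          ≤ ∑ n ∈ Finset.Icc 2 N, 1/((n:ℝ)*((n:ℝ)-1)) := by
            apply Finset.sum_le_sum_of_subset_of_nonneg hsub
            intro n hn _
            have h2n : (2:ℝ) ≤ (n:ℝ) := by exact_mod_cast (Finset.mem_Icc.1 hn).1
            apply le_of_lt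
            apply div_pos one_pos
            nlinarith
        _ = 1 - 1/N := tele N (by omega)
        _ ≤ 1 := by
            have hN0 : (0:ℝ) < N := by exact_mod_cast (by omega : 0 < N)
            have : (0:ℝ) ≤ 1/(N:ℝ) := by positivity
            linarith
    linarith [mertens2 N hN]
  have hstep : Real.exp (-(Real.log (Real.log N) + (27 / Real.log 2 + 3)))
      = Real.exp (-(27 / Real.log 2 + 3)) / Real.log N := by
    rw [neg_add, Real.exp_add, Real.exp_neg (Real.log (Real.log (N:ℝ))), Real.exp_log hu]
    ring
  calc Real.exp (-(27 / Real.log 2 + 3)) / Real.log N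
      = Real.exp (-(Real.log (Real.log N) + (27 / Real.log 2 + 3))) := hstep.symm
    _ ≤ Real.exp (-∑ p ∈ s, 1/((p:ℝ)-1)) := by
        apply Real.exp_le_exp.2
        linarith
    _ = ∏ p ∈ s, Real.exp (-(1/((p:ℝ)-1))) := by
        rw [← Real.exp_sum, ← Finset.sum_neg_distrib]
    _ ≤ ∏ p ∈ s, (1 - 1/(p:ℝ)) := by
        apply Finset.prod_le_prod
        · intro p hp; positivity
        · intro p hp
          have h2 := hp2 p hp
          have hp1 : (0:ℝ) < (p:ℝ) - 1 := by linarith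
          have hp0 : (0:ℝ) < (p:ℝ) := by linarith
          have hpos15 : (0:ℝ) < 1 - 1/(p:ℝ) := by
            rw [sub_pos]
            rw [div_lt_one hp0]
            linarith
          have h6 : (1 - 1/(p:ℝ))⁻¹ ≤ Real.exp (1/((p:ℝ)-1)) := by
            have he : (1 - 1/(p:ℝ))⁻¹ = 1 + 1/((p:ℝ)-1) := by
              rw [inv_eq_one_div]
              field_simp
              ring
            rw [he]
            linarith [Real.add_one_le_exp (1/((p:ℝ)-1))]
          calc Real.exp (-(1/((p:ℝ)-1))) = (Real.exp (1/((p:ℝ)-1)))⁻¹ := Real.exp_neg _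
            _ ≤ 1 - 1/(p:ℝ) := by
                rw [inv_le_comm₀ (Real.exp_pos _) hpos15]
                exact h6

/-! ### Multiplicative function lemmas -/

section G
variable (g : ℕ → ℝ) (h1 : g 1 = 1)
  (hmul : ∀ m n, Nat.Coprime m n → g (m*n) = g m * g n)
  (hnn : ∀ n, 0 ≤ g n)
  (hple : ∀ p : ℕ, p.Prime → g p ≤ 1)
  (hpp : ∀ p ν : ℕ, p.Prime → 2 ≤ ν → g (p^ν) = 0)

include hmul h1 hpp in
lemma g_zero_of_not_squarefree (n : ℕ) (hn : n ≠ 0) (hsq : ¬ Squarefree n) : g n = 0 := by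
  rw [Nat.multiplicative_factorization g hmul h1 hn]
  rw [Nat.squarefree_iff_factorization_le_one hn] at hsq
  push_neg at hsq
  obtain ⟨p, hp⟩ := hsq
  have hpsupp : p ∈ n.factorization.support := by
    rw [Finsupp.mem_support_iff]
    omega
  apply Finset.prod_eq_zero hpsupp
  exact hpp p _ (Nat.prime_of_mem_primeFactors (by rwa [← Nat.support_factorization])) (by omega)

include hmul h1 in
lemma g_of_squarefree (n : ℕ) (hn : n ≠ 0) (hsq : Squarefree n) :
    g n = ∏ p ∈ n.primeFactors, g p := by
  rw [Nat.multiplicative_factorization g hmul h1 hn]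
  rw [Finsupp.prod, ← Nat.support_factorization]
  apply Finset.prod_congr rfl
  intro p hp
  have h1' : n.factorization p = 1 := by
    have hle := (Nat.squarefree_iff_factorization_le_one hn).1 hsq p
    have hge : n.factorization p ≠ 0 := by
      rw [Nat.support_factorization] at hp
      rw [← Finsupp.mem_support_iff, Nat.support_factorization]
      exact hp
    omega
  rw [h1', pow_one]

include hmul in
lemma g_div_prime (n p : ℕ) (hsq : Squarefree n) (hp : p.Prime) (hdvd : p ∣ n) :
    g n = g p * g (n / p) := by
  have hcop : Nat.Coprime p (n / p) := by
    rw [hp.coprime_iff_not_dvd]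
    intro hcon
    rw [Nat.dvd_div_iff_mul_dvd hdvd] at hcon
    exact (Nat.squarefree_iff_prime_squarefree.1 hsq) p hp hcon
  calc g n = g (p * (n / p)) := by rw [Nat.mul_div_cancel' hdvd]
    _ = g p * g (n / p) := hmul p (n/p) hcop

include h1 hmul hnn hpp in
lemma Qbound (x : ℕ) :
    ∑ n ∈ Finset.Icc 1 x, g n / n
      ≤ ∏ p ∈ (Finset.Icc 1 x).filter Nat.Prime, (1 + g p / p) := by
  classical
  set s := (Finset.Icc 1 x).filter Nat.Prime with hs
  have hsq0 : ∀ n ∈ Finset.Icc 1 x, n ≠ 0 := fun n hn => by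
    have := (Finset.mem_Icc.1 hn).1; omega
  have step1 : ∑ n ∈ Finset.Icc 1 x, g n / n
      = ∑ n ∈ (Finset.Icc 1 x).filter Squarefree, g n / n := by
    symm
    apply Finset.sum_subset (Finset.filter_subset _ _)
    intro n hn hn2
    have : ¬ Squarefree n := fun h => hn2 (Finset.mem_filter.2 ⟨hn, h⟩)
    rw [g_zero_of_not_squarefree g h1 hmul hpp n (hsq0 n hn) this, zero_div]
  have step2 : ∀ n ∈ (Finset.Icc 1 x).filter Squarefree,
      g n / n = ∏ p ∈ n.primeFactors, (g p / p) := by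
    intro n hn
    obtain ⟨hn1, hn2⟩ := Finset.mem_filter.1 hn
    rw [g_of_squarefree g h1 hmul n (hsq0 n hn1) hn2, Finset.prod_div_distrib]
    congr 1
    rw [← Nat.cast_prod]
    rw [Nat.prod_primeFactors_of_squarefree hn2]
  rw [step1, Finset.sum_congr rfl step2]
  have himg : ((Finset.Icc 1 x).filter Squarefree).image Nat.primeFactors ⊆ s.powerset := by
    intro A hA
    rw [Finset.mem_image] at hA
    obtain ⟨n, hn, rfl⟩ := hA
    obtain ⟨hn1, _⟩ := Finset.mem_filter.1 hn
    rw [Finset.mem_powerset]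
    intro p hp
    rw [Nat.mem_primeFactors] at hp
    obtain ⟨hp1, hp2, _⟩ := hp
    rw [hs, Finset.mem_filter, Finset.mem_Icc]
    have hnx := (Finset.mem_Icc.1 hn1).2
    exact ⟨⟨hp1.one_lt.le.trans' (by omega), le_trans (Nat.le_of_dvd (by omega) hp2) hnx⟩, hp1⟩
  have hinj : Set.InjOn Nat.primeFactors ((Finset.Icc 1 x).filter Squarefree) := by
    intro a ha b hb hab
    simp only [Finset.coe_filter, Set.mem_setOf_eq] at ha hb
    rw [← Nat.prod_primeFactors_of_squarefree ha.2, ← Nat.prod_primeFactors_of_squarefree hb.2,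
      hab]
  calc ∑ n ∈ (Finset.Icc 1 x).filter Squarefree, ∏ p ∈ n.primeFactors, (g p / p)
      = ∑ A ∈ ((Finset.Icc 1 x).filter Squarefree).image Nat.primeFactors,
          ∏ p ∈ A, (g p / p) := by
        rw [Finset.sum_image (fun a ha b hb => hinj ha hb)]
    _ ≤ ∑ A ∈ s.powerset, ∏ p ∈ A, (g p / p) := by
        apply Finset.sum_le_sum_of_subset_of_nonneg himg
        intro A hA _
        apply Finset.prod_nonneg
        intro p hp
        exact div_nonneg (hnn p) (Nat.cast_nonneg p)
    _ = ∑ A ∈ s.powerset, ∏ p ∈ s \ A, (g p / p) := by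
        apply Finset.sum_nbij' (fun A => s \ A) (fun A => s \ A)
        · intro A hA
          exact Finset.mem_powerset.2 (Finset.sdiff_subset)
        · intro A hA
          exact Finset.mem_powerset.2 (Finset.sdiff_subset)
        · intro A hA
          exact Finset.sdiff_sdiff_eq_self (Finset.mem_powerset.1 hA)
        · intro A hA
          exact Finset.sdiff_sdiff_eq_self (Finset.mem_powerset.1 hA)
        · intro A hA
          rw [Finset.sdiff_sdiff_eq_self (Finset.mem_powerset.1 hA)]
    _ = ∏ p ∈ s, (1 + g p / p) := by
        rw [Finset.prod_add]
        apply Finset.sum_congr rfl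
        intro A hA
        rw [Finset.prod_const_one, one_mul]

include h1 hmul hnn hple hpp in
lemma logsum (x : ℕ) :
    ∑ n ∈ Finset.Icc 1 x, g n * Real.log n
      ≤ Real.log 4 * x * ∑ m ∈ Finset.Icc 1 x, g m / m := by
  classical
  set G : ℕ → ℕ → ℝ := fun d n => if d.Prime then g (n/d) * (g d * Real.log d) else 0 with hG
  have hGnn : ∀ d n, 0 ≤ G d n := by
    intro d n
    rw [hG]
    dsimp only
    split
    · rename_i hd
      exact mul_nonneg (hnn _) (mul_nonneg (hnn _)
        (Real.log_nonneg (by exact_mod_cast hd.one_lt.le)))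
    · exact le_refl 0
  have pointwise : ∀ n ∈ Finset.Icc 1 x, g n * Real.log n ≤ ∑ d ∈ n.divisors, G d n := by
    intro n hn
    have hn1 : 1 ≤ n := (Finset.mem_Icc.1 hn).1
    by_cases hsq : Squarefree n
    · have hps : n.divisors.filter Nat.Prime = n.primeFactors := by
        ext q
        simp only [Finset.mem_filter, Nat.mem_divisors, Nat.mem_primeFactors]
        tauto
      have hlogn : Real.log n = ∑ p ∈ n.primeFactors, Real.log p := by
        conv_lhs => rw [← Nat.prod_primeFactors_of_squarefree hsq]
        rw [Nat.cast_prod, Real.log_prod]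
        intro p hp
        exact_mod_cast (Nat.prime_of_mem_primeFactors hp).pos.ne'
      have e1 : g n * Real.log n = ∑ p ∈ n.primeFactors, G p n := by
        rw [hlogn, Finset.mul_sum]
        apply Finset.sum_congr rfl
        intro p hp
        have hpp' := Nat.prime_of_mem_primeFactors hp
        have hdvd := Nat.dvd_of_mem_primeFactors hp
        rw [hG]
        dsimp only
        rw [if_pos hpp', g_div_prime g hmul n p hsq hpp' hdvd]
        ring
      rw [e1, ← hps, Finset.sum_filter]
      apply Finset.sum_le_sum
      intro d hd
      rw [hG]
      dsimp only
      split
      · exact le_refl _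
      · exact le_refl 0
    · rw [g_zero_of_not_squarefree g h1 hmul hpp n (by omega) hsq, zero_mul]
      exact Finset.sum_nonneg fun d _ => hGnn d n
  calc ∑ n ∈ Finset.Icc 1 x, g n * Real.log n
      ≤ ∑ n ∈ Finset.Icc 1 x, ∑ d ∈ n.divisors, G d n := Finset.sum_le_sum pointwise
    _ = ∑ n ∈ Finset.Icc 1 x, ∑ d ∈ n.divisors, G (n/d) n := by
        apply Finset.sum_congr rfl
        intro n _
        exact (Nat.sum_div_divisors n (fun d => G d n)).symm
    _ = ∑ m ∈ Finset.Icc 1 x, ∑ q ∈ Finset.Icc 1 (x/m), G ((m*q)/m) (m*q) :=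
        swap_div x (fun d n => G (n/d) n)
    _ = ∑ m ∈ Finset.Icc 1 x, g m * ∑ q ∈ (Finset.Icc 1 (x/m)).filter Nat.Prime,
          (g q * Real.log q) := by
        apply Finset.sum_congr rfl
        intro m hm
        have hm1 : 1 ≤ m := (Finset.mem_Icc.1 hm).1
        have e2 : ∀ q ∈ Finset.Icc 1 (x/m), G ((m*q)/m) (m*q)
            = if q.Prime then g m * (g q * Real.log q) else 0 := by
          intro q hq
          have hq1 : 1 ≤ q := (Finset.mem_Icc.1 hq).1
          rw [Nat.mul_div_cancel_left q (by omega : 0 < m), hG]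
          dsimp only
          split
          · rw [Nat.mul_div_cancel m (by omega : 0 < q)]
          · rfl
        rw [Finset.sum_congr rfl e2, ← Finset.sum_filter, Finset.mul_sum]
    _ ≤ ∑ m ∈ Finset.Icc 1 x, g m * (((x/m : ℕ) : ℝ) * Real.log 4) := by
        apply Finset.sum_le_sum
        intro m hm
        apply mul_le_mul_of_nonneg_left _ (hnn m)
        calc ∑ q ∈ (Finset.Icc 1 (x/m)).filter Nat.Prime, (g q * Real.log q)
            ≤ ∑ q ∈ (Finset.Icc 1 (x/m)).filter Nat.Prime, Real.log q := by
              apply Finset.sum_le_sum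
              intro q hq
              have hq' := (Finset.mem_filter.1 hq).2
              exact mul_le_of_le_one_left
                (Real.log_nonneg (by exact_mod_cast hq'.one_lt.le)) (hple q hq')
          _ ≤ ((x/m : ℕ) : ℝ) * Real.log 4 := theta_le (x/m)
    _ ≤ ∑ m ∈ Finset.Icc 1 x, g m * (((x:ℝ)/m) * Real.log 4) := by
        apply Finset.sum_le_sum
        intro m hm
        apply mul_le_mul_of_nonneg_left _ (hnn m)
        apply mul_le_mul_of_nonneg_right Nat.cast_div_le
          (Real.log_nonneg (by norm_num))
    _ = Real.log 4 * x * ∑ m ∈ Finset.Icc 1 x, g m / m := by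
        rw [Finset.mul_sum]
        apply Finset.sum_congr rfl
        intro m _
        ring

end G

/-! ### Part 1 -/

noncomputable def C₁ : ℝ := (Real.log 4 + 1) * Real.exp (27 / Real.log 2 + 3) + 1

lemma C₁_pos : 0 < C₁ := by
  have h4 : 0 ≤ Real.log 4 := Real.log_nonneg (by norm_num)
  have := Real.exp_pos (27 / Real.log 2 + 3)
  unfold C₁
  nlinarith

lemma C₁_ge_one : 1 ≤ C₁ := by
  have h4 : 0 ≤ Real.log 4 := Real.log_nonneg (by norm_num)
  have := Real.exp_pos (27 / Real.log 2 + 3)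
  unfold C₁
  nlinarith

lemma part1 : ∀ g : ℕ → ℝ, g 1 = 1 →
    (∀ m n, Nat.Coprime m n → g (m*n) = g m * g n) →
    (∀ n, 0 ≤ g n) →
    (∀ p : ℕ, p.Prime → g p ≤ 1) →
    (∀ p ν : ℕ, p.Prime → 2 ≤ ν → g (p^ν) = 0) →
    ∀ x : ℕ, 1 ≤ x →
      ∑ n ∈ Finset.Icc 1 x, g n
        ≤ C₁ * x * ∏ p ∈ (Finset.Icc 1 x).filter Nat.Prime,
            ((1 - 1/(p:ℝ)) * (1 + g p / p)) := by
  intro g h1 hmul hnn hple hpp x hx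
  classical
  set s := (Finset.Icc 1 x).filter Nat.Prime with hs
  set D := ∏ p ∈ s, (1 - 1/(p:ℝ)) with hD
  set P := ∏ p ∈ s, (1 + g p / p) with hP
  set Q := ∑ m ∈ Finset.Icc 1 x, g m / m with hQ
  have hprod : ∏ p ∈ s, ((1 - 1/(p:ℝ)) * (1 + g p / p)) = D * P := Finset.prod_mul_distrib
  rw [hprod]
  have hQnn : 0 ≤ Q := Finset.sum_nonneg fun m _ => div_nonneg (hnn m) (Nat.cast_nonneg m)
  have hQP : Q ≤ P := Qbound g h1 hmul hnn hpp x
  have hPnn : 0 ≤ P := le_trans hQnn hQP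
  have hDnn : 0 ≤ D := by
    apply Finset.prod_nonneg
    intro p hp
    have hp2 : (2:ℝ) ≤ (p:ℝ) := by exact_mod_cast (Finset.mem_filter.1 hp).2.two_le
    have : 1/(p:ℝ) ≤ 1 := by
      rw [div_le_one (by linarith)]; linarith
    linarith
  rcases Nat.lt_or_ge x 2 with hx2 | hx2
  · have hx1 : x = 1 := by omega
    subst hx1
    have hIcc : Finset.Icc 1 1 = {1} := rfl
    have hsempty : s = ∅ := by
      rw [hs, hIcc]
      rw [Finset.filter_singleton, if_neg Nat.not_prime_one]
    have hsum1 : ∑ n ∈ Finset.Icc 1 1, g n = 1 := by rw [hIcc, Finset.sum_singleton, h1]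
    rw [hsum1]
    rw [hD, hP, hsempty] at *
    simp only [Finset.prod_empty]
    rw [Nat.cast_one]
    calc (1:ℝ) ≤ C₁ := C₁_ge_one
      _ = C₁ * 1 * (1 * 1) := by ring
  · -- x ≥ 2
    have hxR : (0:ℝ) < x := by positivity
    have hlog : 0 < Real.log x := Real.log_pos (by exact_mod_cast hx2)
    have hm3 := mertens3 x hx2
    rw [← hs, ← hD] at hm3
    have hSlog : (∑ n ∈ Finset.Icc 1 x, g n) * Real.log x ≤ (Real.log 4 + 1) * x * Q := by
      have e1 : (∑ n ∈ Finset.Icc 1 x, g n) * Real.log x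
          = ∑ n ∈ Finset.Icc 1 x, (g n * Real.log n + g n * (Real.log x - Real.log n)) := by
        rw [Finset.sum_mul]
        apply Finset.sum_congr rfl
        intro n _
        ring
      rw [e1, Finset.sum_add_distrib]
      have e2 : ∑ n ∈ Finset.Icc 1 x, g n * (Real.log x - Real.log n) ≤ x * Q := by
        have e3 : ∀ n ∈ Finset.Icc 1 x, g n * (Real.log x - Real.log n)
            ≤ x * (g n / n) := by
          intro n hn
          rw [Finset.mem_Icc] at hn
          have hn0 : (0:ℝ) < n := by exact_mod_cast hn.1
          have hnx : (n:ℝ) ≤ x := by exact_mod_cast hn.2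
          have hlogle : Real.log x - Real.log n ≤ (x:ℝ)/n := by
            rw [← Real.log_div hxR.ne' hn0.ne']
            have := Real.log_le_sub_one_of_pos (show (0:ℝ) < (x:ℝ)/n by positivity)
            linarith
          calc g n * (Real.log x - Real.log n) ≤ g n * ((x:ℝ)/n) :=
                mul_le_mul_of_nonneg_left hlogle (hnn n)
            _ = x * (g n / n) := by ring
        calc ∑ n ∈ Finset.Icc 1 x, g n * (Real.log x - Real.log n)
            ≤ ∑ n ∈ Finset.Icc 1 x, (x:ℝ) * (g n / n) := Finset.sum_le_sum e3
          _ = x * Q := by rw [← Finset.mul_sum]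
      have e4 := logsum g h1 hmul hnn hple hpp x
      rw [← hQ] at e4
      linarith
    -- combine
    have hKpos := Real.exp_pos (27 / Real.log 2 + 3)
    have hinv : 1 / Real.log x ≤ Real.exp (27 / Real.log 2 + 3) * D := by
      calc 1 / Real.log x
          = Real.exp (27 / Real.log 2 + 3)
            * (Real.exp (-(27 / Real.log 2 + 3)) / Real.log x) := by
            rw [Real.exp_neg]
            field_simp
        _ ≤ Real.exp (27 / Real.log 2 + 3) * D :=
            mul_le_mul_of_nonneg_left hm3 hKpos.le
    have ha : (0:ℝ) ≤ Real.log 4 + 1 := by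
      have : 0 ≤ Real.log 4 := Real.log_nonneg (by norm_num)
      linarith
    have hS1 : ∑ n ∈ Finset.Icc 1 x, g n ≤ (Real.log 4 + 1) * x * Q * (1 / Real.log x) := by
      rw [mul_one_div]
      exact (le_div_iff₀ hlog).2 hSlog
    have hS2 : (Real.log 4 + 1) * x * Q * (1 / Real.log x)
        ≤ (Real.log 4 + 1) * x * Q * (Real.exp (27 / Real.log 2 + 3) * D) := by
      apply mul_le_mul_of_nonneg_left hinv
      positivity
    have hS3 : (Real.log 4 + 1) * x * Q * (Real.exp (27 / Real.log 2 + 3) * D)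
        ≤ (Real.log 4 + 1) * x * P * (Real.exp (27 / Real.log 2 + 3) * D) := by
      have h5 : (0:ℝ) ≤ Real.exp (27 / Real.log 2 + 3) * D := mul_nonneg hKpos.le hDnn
      have h6 : (Real.log 4 + 1) * x * Q ≤ (Real.log 4 + 1) * x * P := by
        apply mul_le_mul_of_nonneg_left hQP
        positivity
      exact mul_le_mul_of_nonneg_right h6 h5
    have hS4 : (Real.log 4 + 1) * x * P * (Real.exp (27 / Real.log 2 + 3) * D)
        ≤ C₁ * x * (D * P) := by
      have e5 : (Real.log 4 + 1) * x * P * (Real.exp (27 / Real.log 2 + 3) * D)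
          = ((Real.log 4 + 1) * Real.exp (27 / Real.log 2 + 3)) * (x * (D * P)) := by ring
      have e6 : C₁ * x * (D * P) = C₁ * (x * (D * P)) := by ring
      rw [e5, e6]
      apply mul_le_mul_of_nonneg_right
      · unfold C₁; linarith
      · positivity
    linarith

end MeanValueAux

open MeanValueAux

theorem mean_value_upper_bound :
    (∃ C > (0:ℝ), ∀ g : ℕ → ℝ, g 1 = 1 →
      (∀ m n, Nat.Coprime m n → g (m*n) = g m * g n) →
      (∀ n, 0 ≤ g n) →
      (∀ p : ℕ, p.Prime → g p ≤ 1) →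
      (∀ p ν : ℕ, p.Prime → 2 ≤ ν → g (p^ν) = 0) →
      ∀ x : ℕ, 1 ≤ x →
        ∑ n ∈ Finset.Icc 1 x, g n
          ≤ C * x * ∏ p ∈ (Finset.Icc 1 x).filter Nat.Prime,
              ((1 - 1/(p:ℝ)) * (1 + g p / p))) ∧
    (∃ C > (0:ℝ), ∀ lam : ℕ → ℝ, ∀ x : ℕ, 1 ≤ x →
      (((Finset.Icc 1 x).filter
          (fun n => Squarefree n ∧ ∀ p : ℕ, p.Prime → p ∣ n → lam p ≠ 0)).card : ℝ)
        ≤ C * x * ∏ p ∈ (Finset.Icc 1 x).filter (fun p => p.Prime ∧ lam p = 0),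
            (1 - 1/(p:ℝ))) := by
  constructor
  · exact ⟨C₁, C₁_pos, fun g h1 hmul hnn hple hpp x hx => part1 g h1 hmul hnn hple hpp x hx⟩
  · refine ⟨C₁, C₁_pos, ?_⟩
    intro lam x hx
    classical
    set cond : ℕ → Prop := fun n => Squarefree n ∧ ∀ p : ℕ, p.Prime → p ∣ n → lam p ≠ 0
      with hcond
    set g : ℕ → ℝ := fun n => if cond n then 1 else 0 with hg
    have hnn : ∀ n, 0 ≤ g n := by
      intro n; rw [hg]; dsimp only; split <;> norm_num
    have hple : ∀ p : ℕ, p.Prime → g p ≤ 1 := by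
      intro p _; rw [hg]; dsimp only; split <;> norm_num
    have h1g : g 1 = 1 := by
      rw [hg]
      dsimp only
      rw [if_pos]
      refine ⟨squarefree_one, fun p hp hd => ?_⟩
      exact absurd ((Nat.dvd_one.1 hd) ▸ hp) Nat.not_prime_one
    have hppg : ∀ p ν : ℕ, p.Prime → 2 ≤ ν → g (p^ν) = 0 := by
      intro p ν hp hν
      rw [hg]
      dsimp only
      rw [if_neg]
      rintro ⟨hsq, -⟩
      apply Nat.squarefree_iff_prime_squarefree.1 hsq p hp
      calc p * p = p^2 := (sq p).symm
        _ ∣ p^ν := pow_dvd_pow p hν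
    have hmul : ∀ m n, Nat.Coprime m n → g (m*n) = g m * g n := by
      intro m n hco
      have hiff : cond (m*n) ↔ cond m ∧ cond n := by
        constructor
        · rintro ⟨hsq, hall⟩
          refine ⟨⟨hsq.squarefree_of_dvd (dvd_mul_right m n), fun p hp hd =>
            hall p hp (hd.trans (dvd_mul_right m n))⟩,
            ⟨hsq.squarefree_of_dvd (dvd_mul_left n m), fun p hp hd =>
            hall p hp (hd.trans (dvd_mul_left n m))⟩⟩
        · rintro ⟨⟨hsm, ham⟩, ⟨hsn, han⟩⟩
          refine ⟨(Nat.squarefree_mul hco).2 ⟨hsm, hsn⟩, fun p hp hd => ?_⟩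
          rcases (Nat.Prime.dvd_mul hp).1 hd with h | h
          · exact ham p hp h
          · exact han p hp h
      rw [hg]
      dsimp only
      rw [if_congr hiff rfl rfl]
      by_cases hm : cond m <;> by_cases hn : cond n
      · rw [if_pos (show cond m ∧ cond n from ⟨hm, hn⟩), if_pos hm, if_pos hn]
        norm_num
      · rw [if_neg (fun h => hn h.2), if_neg hn]
        norm_num
      · rw [if_neg (fun h => hm h.1), if_neg hm]
        norm_num
      · rw [if_neg (fun h => hm h.1), if_neg hm]
        norm_num
    have hcard : (((Finset.Icc 1 x).filter cond).card : ℝ) = ∑ n ∈ Finset.Icc 1 x, g n := by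
      rw [hg]
      dsimp only
      rw [Finset.sum_boole]
    have hmain := part1 g h1g hmul hnn hple hppg x hx
    set s := (Finset.Icc 1 x).filter Nat.Prime with hs
    have hsplit : (Finset.Icc 1 x).filter (fun p => p.Prime ∧ lam p = 0)
        = s.filter (fun p => lam p = 0) := by
      rw [hs, Finset.filter_filter]
    have hprodle : ∏ p ∈ s, ((1 - 1/(p:ℝ)) * (1 + g p / p))
        ≤ ∏ p ∈ s.filter (fun p => lam p = 0), (1 - 1/(p:ℝ)) := by
      rw [← Finset.prod_filter_mul_prod_filter_not s (fun p => lam p = 0)]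
      have hp2 : ∀ p ∈ s, (2:ℝ) ≤ (p:ℝ) := by
        intro p hp
        exact_mod_cast (Finset.mem_filter.1 hp).2.two_le
      have hfacnn : ∀ p ∈ s, 0 ≤ 1 - 1/(p:ℝ) := by
        intro p hp
        have := hp2 p hp
        have h0 : (0:ℝ) < p := by linarith
        have : 1/(p:ℝ) ≤ 1 := by rw [div_le_one h0]; linarith
        linarith
      have e1 : ∏ p ∈ s.filter (fun p => lam p = 0), ((1 - 1/(p:ℝ)) * (1 + g p / p))
          = ∏ p ∈ s.filter (fun p => lam p = 0), (1 - 1/(p:ℝ)) := by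
        apply Finset.prod_congr rfl
        intro p hp
        obtain ⟨hps, hlam⟩ := Finset.mem_filter.1 hp
        have hpprime := (Finset.mem_filter.1 hps).2
        have hgp : g p = 0 := by
          rw [hg]
          dsimp only
          rw [if_neg]
          rintro ⟨-, hall⟩
          exact hall p hpprime dvd_rfl hlam
        rw [hgp]
        norm_num
      have e2 : ∏ p ∈ s.filter (fun p => ¬ lam p = 0), ((1 - 1/(p:ℝ)) * (1 + g p / p)) ≤ 1 := by
        apply Finset.prod_le_one
        · intro p hp
          have hps := (Finset.mem_filter.1 hp).1
          have h2 := hp2 p hps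
          have h0 : (0:ℝ) < p := by linarith
          apply mul_nonneg (hfacnn p hps)
          have : 0 ≤ g p / p := div_nonneg (hnn p) h0.le
          linarith
        · intro p hp
          have hps := (Finset.mem_filter.1 hp).1
          have h2 := hp2 p hps
          have h0 : (0:ℝ) < p := by linarith
          have hgle := hple p (Finset.mem_filter.1 hps).2
          have hgnn := hnn p
          have hu : 0 < 1/(p:ℝ) := by positivity
          have hu2 : 1/(p:ℝ) ≤ 1 := by rw [div_le_one h0]; linarith
          have hgd : g p / p ≤ 1/(p:ℝ) := by
            rw [div_le_div_iff₀ h0 h0]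
            nlinarith
          calc (1 - 1/(p:ℝ)) * (1 + g p / p) ≤ (1 - 1/(p:ℝ)) * (1 + 1/(p:ℝ)) := by
                apply mul_le_mul_of_nonneg_left _ (by linarith)
                linarith
            _ = 1 - (1/(p:ℝ))^2 := by ring
            _ ≤ 1 := by nlinarith
      calc (∏ p ∈ s.filter (fun p => lam p = 0), ((1 - 1/(p:ℝ)) * (1 + g p / p)))
            * ∏ p ∈ s.filter (fun p => ¬ lam p = 0), ((1 - 1/(p:ℝ)) * (1 + g p / p))
          ≤ (∏ p ∈ s.filter (fun p => lam p = 0), ((1 - 1/(p:ℝ)) * (1 + g p / p))) * 1 := by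
            apply mul_le_mul_of_nonneg_left e2
            apply Finset.prod_nonneg
            intro p hp
            have hps := (Finset.mem_filter.1 hp).1
            have h2 := hp2 p hps
            have h0 : (0:ℝ) < p := by linarith
            apply mul_nonneg (hfacnn p hps)
            have : 0 ≤ g p / p := div_nonneg (hnn p) h0.le
            linarith
        _ = ∏ p ∈ s.filter (fun p => lam p = 0), (1 - 1/(p:ℝ)) := by rw [mul_one, e1]
    have hCx : (0:ℝ) ≤ C₁ * x := mul_nonneg C₁_pos.le (Nat.cast_nonneg x)
    calc (((Finset.Icc 1 x).filter cond).card : ℝ)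
        = ∑ n ∈ Finset.Icc 1 x, g n := hcard
      _ ≤ C₁ * x * ∏ p ∈ s, ((1 - 1/(p:ℝ)) * (1 + g p / p)) := hmain
      _ ≤ C₁ * x * ∏ p ∈ s.filter (fun p => lam p = 0), (1 - 1/(p:ℝ)) := by
          apply mul_le_mul_of_nonneg_left hprodle hCx
      _ = C₁ * x * ∏ p ∈ (Finset.Icc 1 x).filter (fun p => p.Prime ∧ lam p = 0),
            (1 - 1/(p:ℝ)) := by rw [hsplit]
end
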